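/- arXiv:1104.0196 — 5 statements merged into one kernel-verified Lean document; each statement's English description precedes it below -/
import Mathlib

section
/- Fix an integer n ≥ 1 and let c_* ∈ 𝒯_{2n}. Then the fiber ι^{-1}(c_*) ⊆ 𝒜¹_{2n} is nonempty (so ι is surjective), and the function (r_*, p_*) ↦ τ_{p_*} on ι^{-1}(c_*) attains its minimum at exactly one element, namely the pair (r_*, p_*) determined by: μ_e(r_*) = μ_e(c_*) and μ_e(p_*) = 0 for every even positive integer e, and μ_e(r_*) = 0 and μ_e(p_*) = μ_e(c_*) for every odd positive integer e. -/
/-- A partition: a nonincreasing list of positive integers (possibly empty). -/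
def IsPartition (p : List ℕ) : Prop := p.Pairwise (· ≥ ·) ∧ ∀ x ∈ p, 0 < x

/-- `𝒫̃`: partitions with an even number of parts in which the parts pair up:
`p₁ = p₂, p₃ = p₄, …` (stated 0-indexed). -/
def Ptilde : Set (List ℕ) :=
  {p | IsPartition p ∧ Even p.length ∧ ∀ i, p.getD (2 * i) 0 = p.getD (2 * i + 1) 0}

/-- `𝒮^κ` for `κ ∈ {0,1}`: partitions with all parts even (and, if `κ = 0`,
an even number of parts). -/
def SK (κ : ℕ) : Set (List ℕ) :=
  {r | IsPartition r ∧ (∀ x ∈ r, x % 2 = 0) ∧ (κ = 0 → Even r.length)}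

/-- `𝒮^κ_N`. -/
def SKN (κ N : ℕ) : Set (List ℕ) := {r | r ∈ SK κ ∧ r.sum = N}

/-- `𝒜^κ_{2n} = {(r_*, p_*) ∈ 𝒮^κ × 𝒫̃ : |r_*| + |p_*| = 2n}`. -/
def AK (κ n : ℕ) : Set (List ℕ × List ℕ) :=
  {rp | rp.1 ∈ SK κ ∧ rp.2 ∈ Ptilde ∧ rp.1.sum + rp.2.sum = 2 * n}

/-- The partition whose multiset of parts is the disjoint union of the multisets of
parts of `r` and `p`: sort `r ++ p` nonincreasingly. -/
def pmerge (r p : List ℕ) : List ℕ := (r ++ p).mergeSort (fun a b => decide (b ≤ a))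

/-- `𝒯_{2n}`: partitions of `2n` in which every odd part has even multiplicity. -/
def Tset (n : ℕ) : Set (List ℕ) :=
  {c | IsPartition c ∧ c.sum = 2 * n ∧ ∀ j, j % 2 = 1 → Even (c.count j)}

lemma pmerge_sorted (r p : List ℕ) : (pmerge r p).Pairwise (· ≥ ·) := by
  have h := List.pairwise_mergeSort (le := fun a b : ℕ => decide (b ≤ a))
    (fun a b c hab hbc => by simp_all; omega)
    (fun a b => by simp; omega) (r ++ p)
  exact h.imp (fun {a b} hab => by simpa using hab)

lemma pmerge_perm (r p : List ℕ) : (pmerge r p).Perm (r ++ p) :=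
  List.mergeSort_perm _ _

instance : IsAntisymm ℕ (· ≥ ·) := ⟨fun a b h1 h2 => le_antisymm h2 h1⟩

lemma even_counts_struct : ∀ (p : List ℕ), p.Pairwise (· ≥ ·) → (∀ j, Even (p.count j)) →
    Even p.length ∧ ∀ i, p.getD (2 * i) 0 = p.getD (2 * i + 1) 0
  | [], _, _ => ⟨by simp, fun i => by simp⟩
  | [a], _, he => by
      have := he a
      simp [List.count_cons] at this
  | a :: b :: q, hs, he => by
      have hsq : (b :: q).Pairwise (· ≥ ·) := hs.of_cons
      have hba : b ≤ a := (List.pairwise_cons.mp hs).1 b (by simp)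
      have hab : a = b := by
        by_contra hne
        have hlt : b < a := lt_of_le_of_ne hba (fun h => hne h.symm)
        have hnot : a ∉ b :: q := by
          intro hmem
          rcases List.mem_cons.mp hmem with h | h
          · omega
          · have := (List.pairwise_cons.mp hsq).1 a h; omega
        have := he a
        rw [List.count_cons_self, List.count_eq_zero.mpr hnot] at this
        simp [Nat.even_add_one] at this
      subst hab
      have heq : ∀ j, Even (q.count j) := by
        intro j
        have := he j
        rcases eq_or_ne j a with rfl | hne
        · simp [List.count_cons_self] at this
          rcases this with ⟨k, hk⟩
          exact ⟨k - 1, by omega⟩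
        · simpa [List.count_cons, hne, hne.symm] using this
      obtain ⟨hlen, hpair⟩ := even_counts_struct q hsq.of_cons heq
      refine ⟨?_, ?_⟩
      · simpa [Nat.even_add_one, Nat.not_even_iff_odd, Nat.odd_add_one] using hlen
      · intro i
        cases i with
        | zero => simp
        | succ k =>
            have h1 : 2 * (k + 1) = 2 * k + 1 + 1 := by ring
            rw [h1, List.getD_cons_succ, List.getD_cons_succ,
              List.getD_cons_succ, List.getD_cons_succ]
            exact hpair k

/-- for `n ≥ 1` and `c ∈ 𝒯_{2n}`, the fiber of
`ι : 𝒜¹_{2n} → 𝒯_{2n}` over `c` is nonempty, and the function `(r,p) ↦ τ_p` on the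
fiber attains its minimum at exactly one element, namely the pair with
`μ_e(r) = μ_e(c)`, `μ_e(p) = 0` for even positive `e`, and
`μ_e(r) = 0`, `μ_e(p) = μ_e(c)` for odd `e`. -/
theorem stmt0 (n : ℕ) (hn : 1 ≤ n) (c : List ℕ) (hc : c ∈ Tset n) :
    (∃ rp ∈ AK 1 n, pmerge rp.1 rp.2 = c) ∧
    ∃ rp : List ℕ × List ℕ,
      (rp ∈ AK 1 n ∧ pmerge rp.1 rp.2 = c) ∧
      (∀ e, 0 < e →
        (e % 2 = 0 → rp.1.count e = c.count e ∧ rp.2.count e = 0) ∧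
        (e % 2 = 1 → rp.1.count e = 0 ∧ rp.2.count e = c.count e)) ∧
      (∀ rp' : List ℕ × List ℕ, (rp' ∈ AK 1 n ∧ pmerge rp'.1 rp'.2 = c) →
        rp.2.length ≤ rp'.2.length ∧ (rp'.2.length = rp.2.length → rp' = rp)) := by
  obtain ⟨⟨hcs, hcpos⟩, hcsum, hcodd⟩ := hc
  set r : List ℕ := c.filter (fun x => x % 2 == 0) with hr
  set p : List ℕ := c.filter (fun x => x % 2 == 1) with hp
  have hfun : (fun x : ℕ => x % 2 == 1) = fun x => !(x % 2 == 0) := by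
    funext x
    rcases Nat.mod_two_eq_zero_or_one x with h | h <;> simp [h]
  have hperm : (r ++ p).Perm c := by
    rw [hr, hp, hfun]
    exact List.filter_append_perm _ c
  -- counts of r and p
  have hcr : ∀ e, e % 2 = 0 → r.count e = c.count e := by
    intro e he; exact List.count_filter (by simp [he])
  have hcr0 : ∀ e, e % 2 = 1 → r.count e = 0 := by
    intro e he
    refine List.count_eq_zero.mpr ?_
    simp only [hr, List.mem_filter]
    rintro ⟨-, h⟩; simp at h; omega
  have hcp : ∀ e, e % 2 = 1 → p.count e = c.count e := by
    intro e he; exact List.count_filter (by simp [he])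
  have hcp0 : ∀ e, e % 2 = 0 → p.count e = 0 := by
    intro e he
    refine List.count_eq_zero.mpr ?_
    simp only [hp, List.mem_filter]
    rintro ⟨-, h⟩; simp at h; omega
  have hps : p.Pairwise (· ≥ ·) := hcs.filter _
  have hrs : r.Pairwise (· ≥ ·) := hcs.filter _
  have hpe : ∀ j, Even (p.count j) := by
    intro j
    rcases Nat.mod_two_eq_zero_or_one j with h | h
    · rw [hcp0 j h]; exact Even.zero
    · rw [hcp j h]; exact hcodd j h
  obtain ⟨hplen, hppair⟩ := even_counts_struct p hps hpe
  have hpP : p ∈ Ptilde := by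
    refine ⟨⟨hps, fun x hx => hcpos x (List.mem_of_mem_filter hx)⟩, hplen, hppair⟩
  have hrS : r ∈ SK 1 := by
    refine ⟨⟨hrs, fun x hx => hcpos x (List.mem_of_mem_filter hx)⟩, ?_, by omega⟩
    intro x hx
    have := List.of_mem_filter hx
    simpa using this
  have hsum : r.sum + p.sum = 2 * n := by
    have := hperm.sum_eq
    rw [List.sum_append] at this
    omega
  have hmerge : pmerge r p = c :=
    List.Perm.eq_of_pairwise' (pmerge_sorted r p) hcs ((pmerge_perm r p).trans hperm)
  have hAK : ((r, p) : List ℕ × List ℕ) ∈ AK 1 n := ⟨hrS, hpP, hsum⟩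
  refine ⟨⟨(r, p), hAK, hmerge⟩, (r, p), ⟨hAK, hmerge⟩, ?_, ?_⟩
  · intro e _
    exact ⟨fun he => ⟨hcr e he, hcp0 e he⟩, fun he => ⟨hcr0 e he, hcp e he⟩⟩
  · rintro ⟨r', p'⟩ ⟨⟨⟨⟨hr's, hr'pos⟩, hr'even, -⟩, ⟨⟨hp's, hp'pos⟩, -, -⟩, -⟩, hmerge'⟩
    have hperm' : (r' ++ p').Perm c := by
      rw [← hmerge']; exact (pmerge_perm r' p').symm
    have hcount : ∀ j, c.count j = r'.count j + p'.count j := by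
      intro j
      rw [← hperm'.count_eq j, List.count_append]
    have hr'odd0 : ∀ j, j % 2 = 1 → r'.count j = 0 := by
      intro j hj
      refine List.count_eq_zero.mpr fun hmem => ?_
      have := hr'even j hmem; omega
    have hple : ∀ j, p.count j ≤ p'.count j := by
      intro j
      rcases Nat.mod_two_eq_zero_or_one j with h | h
      · rw [hcp0 j h]; exact Nat.zero_le _
      · rw [hcp j h, hcount j, hr'odd0 j h]; omega
    have hmle : (↑p : Multiset ℕ) ≤ (↑p' : Multiset ℕ) := by
      rw [Multiset.le_iff_count]
      intro a
      simpa using hple a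
    have hlen : p.length ≤ p'.length := by
      have := Multiset.card_le_card hmle
      simpa using this
    refine ⟨hlen, fun hlen' => ?_⟩
    have hmeq : (↑p : Multiset ℕ) = (↑p' : Multiset ℕ) :=
      Multiset.eq_of_le_of_card_le hmle (by simpa using hlen'.le)
    have hpp' : p' = p :=
      List.Perm.eq_of_pairwise' hp's hps (Multiset.coe_eq_coe.mp hmeq).symm
    have hrr' : r' = r := by
      refine List.Perm.eq_of_pairwise' hr's hrs (List.perm_iff_count.mpr fun a => ?_)
      have h1 := hcount a
      have h2 : p'.count a = p.count a := by rw [hpp']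
      rcases Nat.mod_two_eq_zero_or_one a with h | h
      · rw [hcr a h]; rw [h2, hcp0 a h] at h1; omega
      · rw [hcr0 a h, hr'odd0 a h]
    simp [hrr', hpp']
end

section
/- Fix an integer n ≥ 1 and let (c_*, ε) ∈ 𝒯^{(2)}_{2n}. Then the fiber (ι^{(2)})^{-1}(c_*, ε) ⊆ 𝒜¹_{2n} is nonempty (so ι^{(2)} is surjective), and the function (r_*, p_*) ↦ τ_{p_*} on this fiber attains its minimum at exactly one element, namely the pair (r_*, p_*) determined by: μ_e(r_*) = 0 and μ_e(p_*) = μ_e(c_*) whenever e is odd, and also whenever e is even with μ_e(c_*) even and positive and ε(e) = 0; and μ_e(r_*) = μ_e(c_*) and μ_e(p_*) = 0 for all other positive integers e. -/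
/-- The domain of the function `ε` in a pair `(c_*, ε) ∈ 𝒯^{(2)}_{2n}`: even positive
integers `j` whose multiplicity in `c_*` is even and positive. -/
def epsDom (c : List ℕ) (j : ℕ) : Prop :=
  j % 2 = 0 ∧ 0 < j ∧ Even (c.count j) ∧ 0 < c.count j

theorem pairs_aux (l : List ℕ) (hs : l.Pairwise (· ≥ ·)) (he : ∀ e, Even (l.count e)) :
    Even l.length ∧ ∀ i, l.getD (2*i) 0 = l.getD (2*i+1) 0 := by
  match l with
  | [] => exact ⟨Even.zero, fun i => rfl⟩
  | [a] =>
    exfalso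
    have := he a
    simp [List.count_cons] at this
  | a :: b :: t =>
    have hab : a = b := by
      have h1 : Even ((a :: b :: t).count a) := he a
      have h2 : (a :: b :: t).count a = (b :: t).count a + 1 := by
        simp [List.count_cons]
      have h3 : 0 < (b :: t).count a := by
        rcases h1 with ⟨k, hk⟩
        omega
      have hmem : a ∈ b :: t := List.count_pos_iff.mp h3
      rw [List.mem_cons] at hmem
      rcases hmem with rfl | hmem
      · rfl
      · have hba : b ≥ a := (List.pairwise_cons.mp (List.pairwise_cons.mp hs).2).1 a hmem
        have hab' : a ≥ b := (List.pairwise_cons.mp hs).1 b (by simp)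
        omega
    subst hab
    have ht : t.Pairwise (· ≥ ·) := ((List.pairwise_cons.mp hs).2).tail
    have het : ∀ e, Even (t.count e) := by
      intro e
      have := he e
      by_cases h : e = a
      · subst h; simp [List.count_cons] at this
        rcases this with ⟨k, hk⟩
        exact ⟨k - 1, by omega⟩
      · simpa [List.count_cons, h, Ne.symm h] using this
    obtain ⟨h1, h2⟩ := pairs_aux t ht het
    constructor
    · rcases h1 with ⟨k, hk⟩
      exact ⟨k + 1, by simp [List.length_cons]; omega⟩
    · intro i
      cases i with
      | zero => simp
      | succ k =>
        have := h2 k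
        have e1 : 2 * (k + 1) = (2 * k + 1) + 1 := by ring
        have e2 : 2 * (k + 1) + 1 = (2 * k + 1 + 1) + 1 := by ring
        rw [e2, e1]
        simpa using this
  termination_by l.length

/-- for `n ≥ 1` and `(c, ε) ∈ 𝒯^{(2)}_{2n}` (with `ε` taking values in
`{0,1}` on its domain), the fiber of `ι^{(2)} : 𝒜¹_{2n} → 𝒯^{(2)}_{2n}` over `(c, ε)`
is nonempty and the function `(r,p) ↦ τ_p` attains its minimum on this fiber at
exactly one element, namely the explicitly described one. -/
theorem stmt1 (n : ℕ) (hn : 1 ≤ n) (c : List ℕ) (ε : ℕ → ℕ)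
    (hc : c ∈ Tset n) (hε : ∀ j, epsDom c j → ε j ≤ 1) :
    (∃ rp, (rp ∈ AK 1 n ∧ pmerge rp.1 rp.2 = c ∧
        ∀ j, epsDom c j → (ε j = 1 ↔ j ∈ rp.1))) ∧
    ∃ rp : List ℕ × List ℕ,
      (rp ∈ AK 1 n ∧ pmerge rp.1 rp.2 = c ∧
        ∀ j, epsDom c j → (ε j = 1 ↔ j ∈ rp.1)) ∧
      (∀ e, 0 < e →
        ((e % 2 = 1 ∨ (e % 2 = 0 ∧ Even (c.count e) ∧ 0 < c.count e ∧ ε e = 0)) →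
          rp.1.count e = 0 ∧ rp.2.count e = c.count e) ∧
        (¬(e % 2 = 1 ∨ (e % 2 = 0 ∧ Even (c.count e) ∧ 0 < c.count e ∧ ε e = 0)) →
          rp.1.count e = c.count e ∧ rp.2.count e = 0)) ∧
      (∀ rp' : List ℕ × List ℕ,
        (rp' ∈ AK 1 n ∧ pmerge rp'.1 rp'.2 = c ∧
          ∀ j, epsDom c j → (ε j = 1 ↔ j ∈ rp'.1)) →
        rp.2.length ≤ rp'.2.length ∧ (rp'.2.length = rp.2.length → rp' = rp)) := by
  classical
  obtain ⟨⟨hcs, hcpos⟩, hcsum, hodd⟩ := hc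
  set Q : ℕ → Prop :=
    fun e => e % 2 = 1 ∨ (e % 2 = 0 ∧ Even (c.count e) ∧ 0 < c.count e ∧ ε e = 0) with hQdef
  set p : List ℕ := c.filter (fun e => decide (Q e)) with hpdef
  set r : List ℕ := c.filter (fun e => !decide (Q e)) with hrdef
  -- count facts
  have hcp : ∀ e, Q e → p.count e = c.count e := by
    intro e h
    exact List.count_filter (by simp [h])
  have hcp0 : ∀ e, ¬ Q e → p.count e = 0 := by
    intro e h
    refine List.count_eq_zero.mpr ?_
    intro hmem
    rw [hpdef, List.mem_filter] at hmem
    exact h (by simpa using hmem.2)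
  have hcr : ∀ e, Q e → r.count e = 0 := by
    intro e h
    refine List.count_eq_zero.mpr ?_
    intro hmem
    rw [hrdef, List.mem_filter] at hmem
    simp at hmem
    exact hmem.2 h
  have hcr0 : ∀ e, ¬ Q e → r.count e = c.count e := by
    intro e h
    exact List.count_filter (by simp [h])
  have hmemr : ∀ e, e ∈ r ↔ e ∈ c ∧ ¬ Q e := by
    intro e
    rw [hrdef, List.mem_filter]; simp
  have hmemp : ∀ e, e ∈ p ↔ e ∈ c ∧ Q e := by
    intro e
    rw [hpdef, List.mem_filter]; simp
  -- perm
  have hperm : (r ++ p).Perm c := by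
    refine (List.perm_append_comm).trans ?_
    have := List.filter_append_perm (fun e => decide (Q e)) c
    simpa using this
  have hcount : ∀ e, r.count e + p.count e = c.count e := by
    intro e
    have := hperm.count_eq e
    simpa [List.count_append] using this
  -- p properties
  have hpsorted : p.Pairwise (· ≥ ·) := hcs.filter _
  have hrsorted : r.Pairwise (· ≥ ·) := hcs.filter _
  have hpcnt_even : ∀ e, Even (p.count e) := by
    intro e
    by_cases h : Q e
    · rw [hcp e h]
      rcases h with h1 | ⟨_, h2, _, _⟩
      · exact hodd e h1
      · exact h2
    · rw [hcp0 e h]; exact Even.zero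
  obtain ⟨hplen, hppair⟩ := pairs_aux p hpsorted hpcnt_even
  have hpP : p ∈ Ptilde := by
    refine ⟨⟨hpsorted, ?_⟩, hplen, hppair⟩
    intro x hx
    exact hcpos x ((hmemp x).mp hx).1
  have hrS : r ∈ SK 1 := by
    refine ⟨⟨hrsorted, ?_⟩, ?_, ?_⟩
    · intro x hx
      exact hcpos x ((hmemr x).mp hx).1
    · intro x hx
      have hnq := ((hmemr x).mp hx).2
      rw [hQdef] at hnq
      push_neg at hnq
      omega
    · intro h; omega
  have hsum : r.sum + p.sum = 2 * n := by
    have := hperm.sum_eq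
    rw [List.sum_append] at this
    omega
  -- pmerge
  have hmerge_gen : ∀ r' p' : List ℕ, ((r' ++ p').mergeSort (fun a b => decide (b ≤ a))).Pairwise (· ≥ ·) := by
    intro r' p'
    have := List.pairwise_mergeSort (le := fun a b : ℕ => decide (b ≤ a))
      (by intro a b c; simp; omega) (by intro a b; simp; omega) (r' ++ p')
    refine List.Pairwise.imp ?_ this
    intro a b h
    simpa using h
  have hmerge : pmerge r p = c := by
    refine List.Perm.eq_of_pairwise' ?_ hcs (((r ++ p).mergeSort_perm _).trans hperm)
    exact hmerge_gen r p
  have hεiff : ∀ j, epsDom c j → (ε j = 1 ↔ j ∈ r) := by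
    intro j ⟨hj2, hjpos, hjev, hjcnt⟩
    have hjc : j ∈ c := List.count_pos_iff.mp hjcnt
    constructor
    · intro h1
      refine (hmemr j).mpr ⟨hjc, ?_⟩
      intro hq
      simp only [hQdef] at hq
      rcases hq with h | ⟨_, _, _, h0⟩ <;> omega
    · intro hjr
      have hnq := ((hmemr j).mp hjr).2
      have hle1 := hε j ⟨hj2, hjpos, hjev, hjcnt⟩
      simp only [hQdef] at hnq
      have hne : ε j ≠ 0 := fun h0 => hnq (Or.inr ⟨hj2, hjev, hjcnt, h0⟩)
      omega
  have hfib : (r, p) ∈ AK 1 n ∧ pmerge (r, p).1 (r, p).2 = c ∧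
      ∀ j, epsDom c j → (ε j = 1 ↔ j ∈ (r, p).1) :=
    ⟨⟨hrS, hpP, hsum⟩, hmerge, hεiff⟩
  refine ⟨⟨(r, p), hfib⟩, (r, p), hfib, ?_, ?_⟩
  · intro e _
    constructor
    · intro h
      exact ⟨hcr e h, hcp e h⟩
    · intro h
      exact ⟨hcr0 e h, hcp0 e h⟩
  · rintro ⟨r', p'⟩ ⟨⟨⟨⟨hr's, hr'pos⟩, hr'even, _⟩, ⟨⟨hp's, hp'pos⟩, _, _⟩, _⟩, hmerge', hε'⟩
    simp only at hmerge' hε' ⊢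
    have hperm' : (r' ++ p').Perm c := by
      rw [← hmerge', pmerge]
      exact ((r' ++ p').mergeSort_perm _).symm
    have hcount' : ∀ e, r'.count e + p'.count e = c.count e := by
      intro e
      have := hperm'.count_eq e
      simpa [List.count_append] using this
    have key : ∀ e, p.count e ≤ p'.count e := by
      intro e
      by_cases hQe : Q e
      · by_cases hc0 : c.count e = 0
        · rw [hcp e hQe, hc0]; omega
        · have hec : e ∈ c := List.count_pos_iff.mp (by omega)
          have hr0 : r'.count e = 0 := by
            refine List.count_eq_zero.mpr ?_
            intro hmem
            rcases hQe with h1 | ⟨h2, hev, hcnt, hε0⟩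
            · have := hr'even e hmem
              omega
            · have := (hε' e ⟨h2, hcpos e hec, hev, hcnt⟩).mpr hmem
              omega
          have := hcount' e
          rw [hcp e hQe]
          omega
      · rw [hcp0 e hQe]; omega
    have hle : (↑p : Multiset ℕ) ≤ ↑p' := by
      rw [Multiset.le_iff_count]
      intro a
      simpa using key a
    constructor
    · have := Multiset.card_le_card hle
      simpa using this
    · intro hlen
      have hmeq : (↑p : Multiset ℕ) = ↑p' :=
        Multiset.eq_of_le_of_card_le hle (by simp [hlen])
      have hpp' : p' = p :=
        List.Perm.eq_of_pairwise' hp's hpsorted (Multiset.coe_eq_coe.mp hmeq.symm)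
      have hrr' : r' = r := by
        refine List.Perm.eq_of_pairwise' hr's hrsorted (List.perm_iff_count.mpr ?_)
        intro a
        have h1 := hcount' a
        have h2 := hcount a
        rw [hpp'] at h1
        omega
      rw [hpp', hrr']
end

section
/- Fix an integer n ≥ 1 and let (c_*, ε) ∈ 𝒯̃^{(2)}_{2n}. Then the fiber of the restriction ι̃^{(2)} : 𝒜⁰_{2n} → 𝒯̃^{(2)}_{2n} of ι^{(2)} over (c_*, ε) is nonempty, and the function (r_*, p_*) ↦ τ_{p_*} on this fiber attains its minimum at exactly one element (namely the element described by: μ_e(r_*) = 0 and μ_e(p_*) = μ_e(c_*) whenever e is odd, and also whenever e is even with μ_e(c_*) even and positive and ε(e) = 0; and μ_e(r_*) = μ_e(c_*) and μ_e(p_*) = 0 for all other positive integers e). -/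
/-- even counts + sorted implies pairing. -/
lemma pair_of_even_counts : ∀ (l : List ℕ), l.Pairwise (· ≥ ·) → (∀ e, Even (l.count e)) →
    Even l.length ∧ ∀ i, l.getD (2*i) 0 = l.getD (2*i+1) 0
  | [], _, _ => ⟨Even.zero, fun i => by simp⟩
  | a :: t, hs, he => by
    have hmem : a ∈ t := by
      have h1 : (a :: t).count a = t.count a + 1 := by simp [List.count_cons]
      have h2 := he a
      rw [h1] at h2
      have : 0 < t.count a := by
        rcases Nat.even_or_odd (t.count a) with h | h
        · exfalso; rw [Nat.even_add_one] at h2; exact h2 h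
        · rcases h with ⟨k, hk⟩; omega
      exact List.count_pos_iff.mp this
    match t, hmem with
    | b :: t', hmem =>
      have hab : a = b := by
        rcases List.mem_cons.mp hmem with h | h
        · exact h
        · have h1 : a ≥ b := (List.pairwise_cons.mp hs).1 b (List.mem_cons_self)
          have h2 : b ≥ a := (List.pairwise_cons.mp hs.tail).1 a h
          omega
      subst hab
      have hs' : t'.Pairwise (· ≥ ·) := hs.tail.tail
      have he' : ∀ e, Even (t'.count e) := by
        intro e
        have h2 := he e
        by_cases hea : e = a
        · subst hea
          have : (e :: e :: t').count e = t'.count e + 2 := by simp [List.count_cons]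
          rw [this] at h2
          rcases h2 with ⟨k, hk⟩; exact ⟨k - 1, by omega⟩
        · have : (a :: a :: t').count e = t'.count e := by
            simp [List.count_cons, Ne.symm hea]
          rwa [this] at h2
      obtain ⟨hlen, hpair⟩ := pair_of_even_counts t' hs' he'
      constructor
      · rcases hlen with ⟨k, hk⟩; exact ⟨k + 1, by simp [hk]; omega⟩
      · intro i
        match i with
        | 0 => simp
        | j + 1 =>
          have e1 : 2 * (j + 1) = (2 * j) + 1 + 1 := by ring
          rw [e1, List.getD_cons_succ, List.getD_cons_succ,
            List.getD_cons_succ, List.getD_cons_succ]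
          exact hpair j

/-- pairing implies even counts. -/
lemma even_counts_of_pairs : ∀ (l : List ℕ), Even l.length →
    (∀ i, l.getD (2*i) 0 = l.getD (2*i+1) 0) → ∀ e, Even (l.count e)
  | [], _, _, e => by simp
  | [a], hlen, _, e => by simp at hlen
  | a :: b :: t, hlen, hp, e => by
    have hab : a = b := by simpa using hp 0
    subst hab
    have hlen' : Even t.length := by
      rcases hlen with ⟨k, hk⟩; simp at hk; exact ⟨k - 1, by omega⟩
    have hp' : ∀ i, t.getD (2*i) 0 = t.getD (2*i+1) 0 := by
      intro i
      have h := hp (i + 1)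
      have e1 : 2 * (i + 1) = (2 * i) + 1 + 1 := by ring
      rw [e1, List.getD_cons_succ, List.getD_cons_succ,
        List.getD_cons_succ, List.getD_cons_succ] at h
      exact h
    have ht := even_counts_of_pairs t hlen' hp' e
    by_cases hea : e = a
    · subst hea
      have : (e :: e :: t).count e = t.count e + 2 := by simp [List.count_cons]
      rw [this]
      rcases ht with ⟨k, hk⟩; exact ⟨k + 1, by omega⟩
    · have : (a :: a :: t).count e = t.count e := by simp [List.count_cons, Ne.symm hea]
      rwa [this]

lemma pmerge_eq_of_perm {a b c : List ℕ} (hab : (a ++ b).Perm c) (hsc : c.Pairwise (· ≥ ·)) :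
    pmerge a b = c := by
  unfold pmerge
  have h1 : ((a ++ b).mergeSort (fun x y => decide (y ≤ x))).Perm c :=
    (List.mergeSort_perm _ _).trans hab
  have h2 : ((a ++ b).mergeSort (fun x y => decide (y ≤ x))).Pairwise (· ≥ ·) := by
    have := List.pairwise_mergeSort (le := fun x y : ℕ => decide (y ≤ x))
      (fun x y z hxy hyz => by simp only [decide_eq_true_eq] at *; omega)
      (fun x y => by simp only [Bool.or_eq_true, decide_eq_true_eq]; omega) (a ++ b)
    exact this.imp (fun h => by simpa using h)
  haveI : IsAntisymm ℕ (· ≥ ·) := ⟨fun x y h1 h2 => le_antisymm h2 h1⟩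
  exact List.Perm.eq_of_pairwise' h2 hsc h1

/-- for `n ≥ 1` and `(c, ε) ∈ 𝒯̃^{(2)}_{2n}` (so `τ_c` is even), the fiber of
the restriction `ι̃^{(2)} : 𝒜⁰_{2n} → 𝒯̃^{(2)}_{2n}` over `(c, ε)` is nonempty and the
function `(r,p) ↦ τ_p` attains its minimum on this fiber at exactly one element,
namely the explicitly described one. -/
theorem stmt2 (n : ℕ) (hn : 1 ≤ n) (c : List ℕ) (ε : ℕ → ℕ)
    (hc : c ∈ Tset n) (hclen : Even c.length) (hε : ∀ j, epsDom c j → ε j ≤ 1) :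
    (∃ rp, (rp ∈ AK 0 n ∧ pmerge rp.1 rp.2 = c ∧
        ∀ j, epsDom c j → (ε j = 1 ↔ j ∈ rp.1))) ∧
    ∃ rp : List ℕ × List ℕ,
      (rp ∈ AK 0 n ∧ pmerge rp.1 rp.2 = c ∧
        ∀ j, epsDom c j → (ε j = 1 ↔ j ∈ rp.1)) ∧
      (∀ e, 0 < e →
        ((e % 2 = 1 ∨ (e % 2 = 0 ∧ Even (c.count e) ∧ 0 < c.count e ∧ ε e = 0)) →
          rp.1.count e = 0 ∧ rp.2.count e = c.count e) ∧
        (¬(e % 2 = 1 ∨ (e % 2 = 0 ∧ Even (c.count e) ∧ 0 < c.count e ∧ ε e = 0)) →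
          rp.1.count e = c.count e ∧ rp.2.count e = 0)) ∧
      (∀ rp' : List ℕ × List ℕ,
        (rp' ∈ AK 0 n ∧ pmerge rp'.1 rp'.2 = c ∧
          ∀ j, epsDom c j → (ε j = 1 ↔ j ∈ rp'.1)) →
        rp.2.length ≤ rp'.2.length ∧ (rp'.2.length = rp.2.length → rp' = rp)) := by
  obtain ⟨⟨hsc, hposc⟩, hsumc, hoddc⟩ := hc
  set pd : ℕ → Prop := fun e =>
    e % 2 = 1 ∨ (e % 2 = 0 ∧ Even (c.count e) ∧ 0 < c.count e ∧ ε e = 0) with hpd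
  have : DecidablePred pd := fun e => by unfold pd; infer_instance
  set p := c.filter (fun e => decide (pd e)) with hpdef
  set r := c.filter (fun e => !decide (pd e)) with hrdef
  -- counts
  have hcp : ∀ e, p.count e = if pd e then c.count e else 0 := by
    intro e
    by_cases h : pd e
    · rw [if_pos h]; exact List.count_filter (by simp [h])
    · rw [if_neg h]
      exact List.count_eq_zero.mpr (fun hm => h (by simpa using (List.mem_filter.mp hm).2))
  have hcr : ∀ e, r.count e = if pd e then 0 else c.count e := by
    intro e
    by_cases h : pd e
    · rw [if_pos h]
      exact List.count_eq_zero.mpr (fun hm => by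
        have := (List.mem_filter.mp hm).2; simp [h] at this)
    · rw [if_neg h]; exact List.count_filter (by simp [h])
  have hperm : (r ++ p).Perm c :=
    List.perm_append_comm.trans (List.filter_append_perm (fun e => decide (pd e)) c)
  have hcount : ∀ e, r.count e + p.count e = c.count e := by
    intro e
    have := hperm.count_eq e
    simpa [List.count_append] using this
  -- p ∈ Ptilde
  have hsp : p.Pairwise (· ≥ ·) := hsc.filter _
  have hposp : ∀ x ∈ p, 0 < x := fun x hx => hposc x (List.mem_filter.mp hx).1
  have hevenp : ∀ e, Even (p.count e) := by
    intro e
    rw [hcp e]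
    split
    · rename_i h
      rcases h with h | h
      · exact hoddc e h
      · exact h.2.1
    · exact Even.zero
  obtain ⟨hlenp, hpairp⟩ := pair_of_even_counts p hsp hevenp
  have hpP : p ∈ Ptilde := ⟨⟨hsp, hposp⟩, hlenp, hpairp⟩
  -- r ∈ SK 0
  have hsr : r.Pairwise (· ≥ ·) := hsc.filter _
  have hposr : ∀ x ∈ r, 0 < x := fun x hx => hposc x (List.mem_filter.mp hx).1
  have hevr : ∀ x ∈ r, x % 2 = 0 := by
    intro x hx
    have h := (List.mem_filter.mp hx).2
    simp only [Bool.not_eq_eq_eq_not, Bool.not_true, decide_eq_false_iff_not] at h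
    have : ¬ (x % 2 = 1) := fun hh => h (Or.inl hh)
    omega
  have hlenr : Even r.length := by
    have h1 : r.length + p.length = c.length := by
      have := hperm.length_eq; simpa [List.length_append] using this
    rw [Nat.even_iff] at hclen hlenp ⊢
    omega
  have hrS : r ∈ SK 0 := ⟨⟨hsr, hposr⟩, hevr, fun _ => hlenr⟩
  have hsum : r.sum + p.sum = 2 * n := by
    have := hperm.sum_eq; rw [List.sum_append] at this; omega
  have hmerge : pmerge r p = c := pmerge_eq_of_perm hperm hsc
  -- epsilon condition
  have hepsc : ∀ j, epsDom c j → (ε j = 1 ↔ j ∈ r) := by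
    intro j ⟨hj2, hjpos, hjev, hjcnt⟩
    have hjc : j ∈ c := List.count_pos_iff.mp hjcnt
    constructor
    · intro h1
      have hnpd : ¬ pd j := by
        intro hpdj
        rcases hpdj with h | h
        · omega
        · omega
      exact List.mem_filter.mpr ⟨hjc, by simp [hnpd]⟩
    · intro hjr
      have h := (List.mem_filter.mp hjr).2
      simp only [Bool.not_eq_eq_eq_not, Bool.not_true, decide_eq_false_iff_not] at h
      have : ¬ (ε j = 0) := fun h0 => h (Or.inr ⟨hj2, hjev, hjcnt, h0⟩)
      have := hε j ⟨hj2, hjpos, hjev, hjcnt⟩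
      omega
  have hfib : ((r, p) ∈ AK 0 n ∧ pmerge (r, p).1 (r, p).2 = c ∧
      ∀ j, epsDom c j → (ε j = 1 ↔ j ∈ (r, p).1)) :=
    ⟨⟨hrS, hpP, hsum⟩, hmerge, hepsc⟩
  refine ⟨⟨(r, p), hfib⟩, (r, p), hfib, ?_, ?_⟩
  · -- counts description
    intro e _he
    constructor
    · intro h
      have hpde : pd e := h
      simp [hcr e, hcp e, hpde]
    · intro h
      have hpde : ¬ pd e := h
      simp [hcr e, hcp e, hpde]
  · -- minimality and uniqueness
    rintro ⟨r', p'⟩ ⟨⟨⟨⟨hsr', hposr'⟩, hevr', hlenr'⟩, ⟨⟨hsp', hposp'⟩, hlenp', hpairp'⟩, hsum'⟩,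
      hmerge', heps'⟩
    simp only at hmerge' heps' ⊢
    unfold pmerge at hmerge'
    have hperm' : (r' ++ p').Perm c := hmerge' ▸ (List.mergeSort_perm _ _).symm
    have hcount' : ∀ e, r'.count e + p'.count e = c.count e := by
      intro e
      have := hperm'.count_eq e
      simpa [List.count_append] using this
    have hevenp' : ∀ e, Even (p'.count e) := even_counts_of_pairs p' hlenp' hpairp'
    have hple : ∀ e, p.count e ≤ p'.count e := by
      intro e
      by_cases h : pd e
      · have hr0 : r'.count e = 0 := by
          rcases h with h1 | h1
          · exact List.count_eq_zero.mpr (fun hm => by have := hevr' e hm; omega)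
          · obtain ⟨he2, hev, hcnt, he0⟩ := h1
            have hepos : 0 < e := by
              have hec : e ∈ c := List.count_pos_iff.mp hcnt
              exact hposc e hec
            have := heps' e ⟨he2, hepos, hev, hcnt⟩
            exact List.count_eq_zero.mpr (fun hm => by have := this.mpr hm; omega)
        have h1 := hcount' e
        rw [hcp e, if_pos h]
        omega
      · rw [hcp e, if_neg h]; exact Nat.zero_le _
    have hmle : (↑p : Multiset ℕ) ≤ (↑p' : Multiset ℕ) :=
      Multiset.le_iff_count.mpr (fun a => by simpa [Multiset.coe_count] using hple a)
    have hlen : p.length ≤ p'.length := by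
      have := Multiset.card_le_card hmle
      simpa [Multiset.coe_card] using this
    refine ⟨hlen, ?_⟩
    intro hleneq
    have hmeq : (↑p : Multiset ℕ) = (↑p' : Multiset ℕ) :=
      Multiset.eq_of_le_of_card_le hmle (by simp [Multiset.coe_card, hleneq])
    have hppm : p.Perm p' := Multiset.coe_eq_coe.mp hmeq
    haveI : IsAntisymm ℕ (· ≥ ·) := ⟨fun x y h1 h2 => le_antisymm h2 h1⟩
    have hpeq : p = p' := List.Perm.eq_of_pairwise' hsp hsp' hppm
    have hrpm : r'.Perm r := by
      rw [List.perm_iff_count]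
      intro a
      have h1 := hcount a
      have h2 := hcount' a
      rw [← hpeq] at h2
      omega
    have hreq : r' = r := List.Perm.eq_of_pairwise' hsr' hsr hrpm
    simp [hreq, hpeq]
end

section
/- For every even natural number N and every κ ∈ {0,1}, the map Ξ restricts to a bijection from 𝒮^κ_N onto ℛ_{N+κ}. In particular, for every r_* ∈ 𝒮^κ_N the sequence Ξ(r_*) is a nonincreasing sequence of positive integers lying in ℛ, with |Ξ(r_*)| = N + κ. -/
/-- `𝒬`: partitions in which every even part has even multiplicity. -/
def Qset : Set (List ℕ) :=
  {c | IsPartition c ∧ ∀ j, j % 2 = 0 → Even (c.count j)}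

/-- `𝒬_N`. -/
def QN (N : ℕ) : Set (List ℕ) := {c | c ∈ Qset ∧ c.sum = N}

/-- The odd parts of `l`, listed in (nonincreasing) order with multiplicity:
`r¹ ≥ r² ≥ … ≥ r^s`. -/
def oddParts (l : List ℕ) : List ℕ := l.filter (fun x => x % 2 = 1)

/-- The set `ℛ` (conditions stated with 1-based indices `u` for the list of odd parts;
`(oddParts l).getD (u-1) 0` is `r^u`). -/
def Rset : Set (List ℕ) :=
  {l | l ∈ Qset ∧
    (l ≠ [] → l.getD 0 0 % 2 = 1) ∧
    (l ≠ [] → Even l.length → l.getD (l.length - 1) 0 % 2 = 1) ∧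
    (∀ u, 1 ≤ u → u + 1 ≤ (oddParts l).length → u % 2 = 1 →
        (oddParts l).getD u 0 < (oddParts l).getD (u - 1) 0) ∧
    (∀ u, 1 ≤ u → u + 1 ≤ (oddParts l).length → u % 2 = 0 →
        ∀ k < l.length,
          ¬((oddParts l).getD u 0 < l.getD k 0 ∧ l.getD k 0 < (oddParts l).getD (u - 1) 0))}

/-- `ℛ_N = ℛ ∩ 𝒬_N`. -/
def RN (N : ℕ) : Set (List ℕ) := {l | l ∈ Rset ∧ l.sum = N}

/-- The `t`-th entry (0-indexed; `t` corresponds to the 1-based index `t+1`) of `Ξ(l)`: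
`l_t + ψ(t)` where `ψ(t) = 1` if `t+1` is odd and `l_t < l_x` for all `x < t`;
`ψ(t) = -1` if `t+1` is even and `l_x < l_t` for all `x > t` in range; `ψ(t) = 0` else. -/
def xiEntry (l : List ℕ) (t : ℕ) : ℕ :=
  if (t + 1) % 2 = 1 ∧ ∀ x < t, l.getD t 0 < l.getD x 0 then l.getD t 0 + 1
  else if (t + 1) % 2 = 0 ∧ ∀ x < l.length, t < x → l.getD x 0 < l.getD t 0 then
    l.getD t 0 - 1
  else l.getD t 0

/-- The map `Ξ : 𝒮^κ → 𝒫¹`; a final part `1` is appended when `σ + κ` is odd. -/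
def xi (κ : ℕ) (l : List ℕ) : List ℕ :=
  (List.range l.length).map (xiEntry l) ++ (if (l.length + κ) % 2 = 1 then [1] else [])


namespace Stmt3

/-- Recursive reformulation of `Ξ` (without the appended 1), for lists starting at an
even position, where `p` is the previous part (or anything bigger than the head, at top). -/
def xr : ℕ → List ℕ → List ℕ
  | _, [] => []
  | p, [a] => [if a < p then a + 1 else a]
  | p, a :: b :: rest =>
      (if a < p then a + 1 else a) :: (if rest.headD 0 < b then b - 1 else b) :: xr b rest

/-- Variant of `xr` for lists starting at an odd position. -/
def xrO : List ℕ → List ℕ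
  | [] => []
  | x :: t => (if t.headD 0 < x then x - 1 else x) :: xr x t

/-- The optional trailing `[1]`:  present iff `t` and the final position parity is even. -/
def Tl (b t : Bool) (n : ℕ) : List ℕ :=
  if t = true ∧ n % 2 = (if b then 0 else 1) then [1] else []

/-- Inverse of `xr` (also strips the trailing `[1]`). -/
def yr : List ℕ → List ℕ
  | [] => []
  | [x] => if x = 1 then [] else [x - x % 2]
  | x :: y :: c => (x - x % 2) :: (y + y % 2) :: yr c

@[simp] lemma length_xr (p : ℕ) (l : List ℕ) : (xr p l).length = l.length := by
  induction p, l using xr.induct with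
  | case1 => rfl
  | case2 => rfl
  | case3 p a b rest ih => simp [xr, ih]

@[simp] lemma length_xrO (l : List ℕ) : (xrO l).length = l.length := by
  cases l with
  | nil => rfl
  | cons x t => simp [xrO]

lemma sum_xr (p : ℕ) (l : List ℕ) (hp : ∀ x ∈ l, 0 < x) :
    (xr p l).sum + (if l ≠ [] ∧ l.length % 2 = 0 then 1 else 0)
      = l.sum + (if l ≠ [] ∧ l.headD 0 < p then 1 else 0) := by
  induction p, l using xr.induct with
  | case1 => simp [xr]
  | case2 p a =>
    have h1 := hp a (by simp)
    simp only [xr, List.sum_cons, List.sum_nil]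
    simp only [ne_eq, List.cons_ne_nil, not_false_eq_true, true_and, List.length_singleton,
      List.headD_cons]
    split_ifs <;> try contradiction
    all_goals omega
  | case3 p a b rest ih =>
    have hb : 0 < b := hp b (by simp)
    have ihs := ih (fun x hx => hp x (by simp [hx]))
    simp only [xr, List.sum_cons, List.length_cons, ne_eq, List.cons_ne_nil, not_false_eq_true,
      true_and, List.headD_cons]
    have hlen : (rest.length + 1 + 1) % 2 = rest.length % 2 := by omega
    rw [hlen]
    rcases rest with _ | ⟨r, rs⟩
    · simp only [List.headD_nil, List.sum_nil, List.length_nil] at ihs ⊢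
      simp only [xr] at ihs ⊢
      simp at ihs
      split_ifs <;> try contradiction
      all_goals (simp [hb] <;> omega)
    · simp only [List.headD_cons, ne_eq, List.cons_ne_nil, not_false_eq_true, true_and,
        List.length_cons] at ihs ⊢
      split_ifs at ihs ⊢ <;> (by_cases hrb : r < b <;> simp only [hrb, ↓reduceIte] at ihs ⊢ <;> omega)

lemma yr_xr (t : Bool) (l : List ℕ) (hev : ∀ x ∈ l, x % 2 = 0) (hp : ∀ x ∈ l, 0 < x) (p : ℕ) :
    yr (xr p l ++ Tl true t l.length) = l := by
  induction p, l using xr.induct with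
  | case1 =>
    simp only [xr, List.nil_append, Tl]
    cases t <;> simp [yr]
  | case2 p a =>
    have h2 : 2 ≤ a := by
      have := hev a (by simp); have := hp a (by simp); omega
    have ha := hev a (by simp)
    have htl : Tl true t [a].length = [] := by simp [Tl]
    rw [htl]
    have hne : (if a < p then a + 1 else a) ≠ 1 := by split <;> omega
    have hval : (if a < p then a + 1 else a) - (if a < p then a + 1 else a) % 2 = a := by
      split <;> omega
    simp only [xr, List.append_nil, yr, if_neg hne, hval]
  | case3 p a b rest ih =>
    have ha : a % 2 = 0 := hev a (by simp)
    have hb : b % 2 = 0 := hev b (by simp)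
    have hbp : 0 < b := hp b (by simp)
    have htl : Tl true t (a :: b :: rest).length = Tl true t rest.length := by
      simp only [Tl, List.length_cons]
      have : (rest.length + 1 + 1) % 2 = rest.length % 2 := by omega
      rw [this]
    rw [htl]
    simp only [xr, List.cons_append]
    have ihs := ih (fun x hx => hev x (by simp [hx])) (fun x hx => hp x (by simp [hx]))
    have e1 : (if a < p then a + 1 else a) - (if a < p then a + 1 else a) % 2 = a := by
      split <;> omega
    have e2 : (if rest.headD 0 < b then b - 1 else b) + (if rest.headD 0 < b then b - 1 else b) % 2 = b := by
      split <;> omega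
    simp only [yr, e1, e2, ihs]

-- peel equations
lemma headD_rep_append (n a : ℕ) (rest : List ℕ) :
    (List.replicate (n+1) a ++ rest).headD 0 = a := by simp [List.replicate_succ]

lemma xr_peel_odd (k : ℕ) : ∀ (p a : ℕ) (rest : List ℕ), 0 < a → rest.headD 0 < a →
    xr p (List.replicate (2*k+1) a ++ rest)
      = (if a < p then a + 1 else a) :: (List.replicate (2*k) a ++ xrO rest) := by
  induction k with
  | zero =>
    intro p a rest ha hr
    simp only [Nat.mul_zero, Nat.zero_add, List.replicate_one, List.replicate_zero,
      List.singleton_append, List.nil_append]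
    cases rest with
    | nil => simp [xr, xrO]
    | cons r rt => simp [xr, xrO]
  | succ k ih =>
    intro p a rest ha hr
    have h1 : 2*(k+1)+1 = (2*k+1) + 1 + 1 := by ring
    rw [h1, List.replicate_succ, List.replicate_succ, List.cons_append, List.cons_append]
    show xr p (a :: a :: (List.replicate (2*k+1) a ++ rest)) = _
    rw [xr]
    have h2 : (List.replicate (2*k+1) a ++ rest).headD 0 = a := by
      have : 2*k+1 = (2*k)+1 := by ring
      rw [this, headD_rep_append]
    rw [h2, if_neg (lt_irrefl a), ih a a rest ha hr, if_neg (lt_irrefl a)]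
    have h3 : 2*(k+1) = (2*k) + 1 + 1 := by ring
    rw [h3, List.replicate_succ, List.replicate_succ]
    simp

lemma xr_peel_even (k : ℕ) : ∀ (p a : ℕ) (rest : List ℕ), 0 < a → rest.headD 0 < a →
    xr p (List.replicate (2*k+2) a ++ rest)
      = (if a < p then a + 1 else a) :: (List.replicate (2*k) a ++ ((a-1) :: xr a rest)) := by
  induction k with
  | zero =>
    intro p a rest ha hr
    show xr p (a :: a :: rest) = _
    rw [xr, if_pos hr]
    simp
  | succ k ih =>
    intro p a rest ha hr
    have h1 : 2*(k+1)+2 = (2*k+2) + 1 + 1 := by ring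
    rw [h1, List.replicate_succ, List.replicate_succ, List.cons_append, List.cons_append]
    show xr p (a :: a :: (List.replicate (2*k+2) a ++ rest)) = _
    rw [xr]
    have h2 : (List.replicate (2*k+2) a ++ rest).headD 0 = a := by
      have : 2*k+2 = (2*k+1)+1 := by ring
      rw [this, headD_rep_append]
    rw [h2, if_neg (lt_irrefl a), ih a a rest ha hr, if_neg (lt_irrefl a)]
    have h3 : 2*(k+1) = (2*k) + 1 + 1 := by ring
    rw [h3, List.replicate_succ, List.replicate_succ]
    simp

lemma xrO_peel_odd (k : ℕ) (a : ℕ) (rest : List ℕ) (ha : 0 < a) (hr : rest.headD 0 < a) :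
    xrO (List.replicate (2*k+1) a ++ rest)
      = List.replicate (2*k) a ++ ((a-1) :: xr a rest) := by
  cases k with
  | zero =>
    simp only [Nat.mul_zero, Nat.zero_add, List.replicate_one, List.singleton_append,
      List.replicate_zero, List.nil_append]
    rw [xrO, if_pos hr]
  | succ k =>
    have h1 : 2*(k+1)+1 = (2*k+2) + 1 := by ring
    rw [h1, List.replicate_succ, List.cons_append]
    rw [xrO]
    have h2 : (List.replicate (2*k+2) a ++ rest).headD 0 = a := by
      have : 2*k+2 = (2*k+1)+1 := by ring
      rw [this, headD_rep_append]
    rw [h2, if_neg (lt_irrefl a), xr_peel_even k a a rest ha hr, if_neg (lt_irrefl a)]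
    have h3 : 2*(k+1) = (2*k) + 1 + 1 := by ring
    rw [h3, List.replicate_succ, List.replicate_succ]
    simp

lemma xrO_peel_even (k : ℕ) (a : ℕ) (rest : List ℕ) (ha : 0 < a) (hr : rest.headD 0 < a) :
    xrO (List.replicate (2*k+2) a ++ rest)
      = List.replicate (2*k+2) a ++ xrO rest := by
  have h1 : 2*k+2 = (2*k+1) + 1 := by ring
  rw [h1, List.replicate_succ, List.cons_append, xrO]
  have h2 : (List.replicate (2*k+1) a ++ rest).headD 0 = a := by
    have : 2*k+1 = (2*k)+1 := by ring
    rw [this, headD_rep_append]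
  rw [h2, if_neg (lt_irrefl a), xr_peel_odd k a a rest ha hr, if_neg (lt_irrefl a)]
  rw [List.replicate_succ]
  simp

-- run peeling of a sorted list
lemma run_peel : ∀ (l : List ℕ), l.Pairwise (· ≥ ·) → ∀ a : ℕ, (∀ x ∈ l, x ≤ a) →
    ∃ rest, l = List.replicate (l.count a) a ++ rest ∧ rest.Pairwise (· ≥ ·) ∧
      (∀ x ∈ rest, x < a) ∧ rest.length + l.count a = l.length := by
  intro l
  induction l with
  | nil => intro _ a _; exact ⟨[], by simp, by simp, by simp, by simp⟩
  | cons x t ih =>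
    intro hs a hle
    rw [List.pairwise_cons] at hs
    by_cases hxa : x = a
    · subst hxa
      obtain ⟨rest, h1, h2, h3, h4⟩ := ih hs.2 x (fun y hy => hs.1 y hy)
      refine ⟨rest, ?_, h2, h3, ?_⟩
      · rw [List.count_cons_self, List.replicate_succ, List.cons_append]
        exact congrArg (x :: ·) h1
      · simp only [List.count_cons_self, List.length_cons]; omega
    · have hxlt : x < a := lt_of_le_of_ne (hle x (by simp)) hxa
      have hcnt : (x :: t).count a = 0 := by
        rw [List.count_eq_zero]
        intro hmem
        rcases List.mem_cons.1 hmem with h | h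
        · exact hxa h.symm
        · exact absurd rfl (ne_of_lt (lt_of_le_of_lt (hs.1 a h) hxlt)).symm
      refine ⟨x :: t, by simp [hcnt], List.pairwise_cons.2 hs, ?_, by simp [hcnt]⟩
      intro y hy
      rcases List.mem_cons.1 hy with h | h
      · exact h ▸ hxlt
      · exact lt_of_le_of_lt (hs.1 y h) hxlt

-- bridge from xiEntry to xr
/-- adjacent-comparison form of `xiEntry` -/
def aE (p : ℕ) (l : List ℕ) (t : ℕ) : ℕ :=
  if t % 2 = 0 then
    (if l.getD t 0 < (if t = 0 then p else l.getD (t-1) 0) then l.getD t 0 + 1 else l.getD t 0)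
  else (if l.getD (t+1) 0 < l.getD t 0 then l.getD t 0 - 1 else l.getD t 0)

lemma aE_shift (p a b : ℕ) (rest : List ℕ) (t : ℕ) :
    aE p (a :: b :: rest) (t+2) = aE b rest t := by
  unfold aE
  have h2 : (t+2) % 2 = t % 2 := by omega
  rw [h2]
  have g1 : (a :: b :: rest).getD (t+2) 0 = rest.getD t 0 := rfl
  have g2 : (a :: b :: rest).getD (t+3) 0 = rest.getD (t+1) 0 := rfl
  have g3 : t + 2 - 1 = (t - 1) + 2 ∨ t = 0 := by omega
  rcases Nat.eq_zero_or_pos t with ht | ht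
  · subst ht
    simp
  · have h0 : t + 2 ≠ 0 := by omega
    have h0' : t ≠ 0 := by omega
    rw [g1, if_neg h0, if_neg h0']
    have : t + 2 - 1 = (t - 1) + 2 := by omega
    rw [this]
    have g4 : (a :: b :: rest).getD (t-1+2) 0 = rest.getD (t-1) 0 := rfl
    rw [g4]
    have : t + 2 + 1 = t + 3 := by omega
    rw [this, g2]

lemma bridge2 : ∀ (p : ℕ) (l : List ℕ), (List.range l.length).map (aE p l) = xr p l := by
  intro p l
  induction p, l using xr.induct with
  | case1 => simp [xr]
  | case2 p a => simp [xr, aE, List.range_succ]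
  | case3 p a b rest ih =>
    have hlen : (a :: b :: rest).length = rest.length + 2 := by simp
    rw [hlen]
    have hr : List.range (rest.length + 2)
        = 0 :: 1 :: (List.range rest.length).map (· + 2) := by
      rw [List.range_succ_eq_map, List.range_succ_eq_map, List.map_cons, List.map_map]
      refine congrArg (0 :: ·) (congrArg₂ (· :: ·) rfl ?_)
      apply List.map_congr_left; intro x _
      simp only [Function.comp_apply]
    rw [hr]
    simp only [List.map_cons, List.map_map]
    have e0 : aE p (a :: b :: rest) 0 = (if a < p then a + 1 else a) := by simp [aE]
    have e1 : aE p (a :: b :: rest) 1 = (if rest.headD 0 < b then b - 1 else b) := by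
      cases rest <;> simp [aE]
    have e2 : (List.range rest.length).map (aE p (a :: b :: rest) ∘ (· + 2))
        = (List.range rest.length).map (aE b rest) := by
      apply List.map_congr_left
      intro x _
      exact aE_shift p a b rest x
    rw [e0, e1, e2, ih, xr]

lemma sorted_getD_le {l : List ℕ} (hs : l.Pairwise (· ≥ ·)) {i j : ℕ} (hij : i ≤ j)
    (hj : j < l.length) : l.getD j 0 ≤ l.getD i 0 := by
  rcases eq_or_lt_of_le hij with rfl | hlt
  · exact le_rfl
  · rw [List.getD_eq_getElem _ _ hj, List.getD_eq_getElem _ _ (lt_trans hlt hj)]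
    exact List.pairwise_iff_getElem.1 hs i j _ _ hlt

lemma bridge1 {l : List ℕ} (hs : l.Pairwise (· ≥ ·)) (hp : ∀ x ∈ l, 0 < x)
    {t : ℕ} (ht : t < l.length) : xiEntry l t = aE (l.headD 0 + 1) l t := by
  have hpos : 0 < l.getD t 0 := by
    rw [List.getD_eq_getElem _ _ ht]; exact hp _ (List.getElem_mem ht)
  have hhd : l.getD 0 0 = l.headD 0 := by cases l <;> rfl
  rcases Nat.mod_two_eq_zero_or_one t with h2 | h2
  · have hB : aE (l.headD 0 + 1) l t
        = (if l.getD t 0 < (if t = 0 then l.headD 0 + 1 else l.getD (t-1) 0) then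
            l.getD t 0 + 1 else l.getD t 0) := by
      unfold aE; rw [if_pos h2]
    have hiff : (∀ x < t, l.getD t 0 < l.getD x 0)
        ↔ (l.getD t 0 < if t = 0 then l.headD 0 + 1 else l.getD (t-1) 0) := by
      rcases Nat.eq_zero_or_pos t with rfl | htpos
      · rw [if_pos rfl]
        exact ⟨fun _ => by omega, fun _ x hx => by omega⟩
      · rw [if_neg (by omega)]
        exact ⟨fun h => h _ (by omega),
          fun h x hx => lt_of_lt_of_le h (sorted_getD_le hs (by omega) (by omega))⟩
    by_cases hc : ∀ x < t, l.getD t 0 < l.getD x 0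
    · have hx : xiEntry l t = l.getD t 0 + 1 := by
        unfold xiEntry
        rw [if_pos (⟨by omega, hc⟩ : (t+1) % 2 = 1 ∧ ∀ x < t, l.getD t 0 < l.getD x 0)]
      rw [hx, hB, if_pos (hiff.1 hc)]
    · have hx : xiEntry l t = l.getD t 0 := by
        unfold xiEntry
        rw [if_neg (fun hh : ((t+1) % 2 = 1 ∧ ∀ x < t, l.getD t 0 < l.getD x 0) => hc hh.2)]
        rw [if_neg (fun hh : ((t+1) % 2 = 0 ∧ ∀ x < l.length, t < x →
              l.getD x 0 < l.getD t 0) => by have := hh.1; omega)]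
      rw [hx, hB, if_neg (fun hh => hc (hiff.2 hh))]
  · have hB : aE (l.headD 0 + 1) l t
        = (if l.getD (t+1) 0 < l.getD t 0 then l.getD t 0 - 1 else l.getD t 0) := by
      unfold aE; rw [if_neg (by omega)]
    have hiff : (∀ x < l.length, t < x → l.getD x 0 < l.getD t 0)
        ↔ l.getD (t+1) 0 < l.getD t 0 := by
      constructor
      · intro h
        rcases Nat.lt_or_ge (t+1) l.length with hh | hh
        · exact h _ hh (by omega)
        · rw [List.getD_eq_default _ _ hh]; exact hpos
      · intro h x hx htx
        calc l.getD x 0 ≤ l.getD (t+1) 0 := sorted_getD_le hs (by omega) hx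
          _ < l.getD t 0 := h
    by_cases hc : ∀ x < l.length, t < x → l.getD x 0 < l.getD t 0
    · have hx : xiEntry l t = l.getD t 0 - 1 := by
        unfold xiEntry
        rw [if_neg (fun hh : ((t+1) % 2 = 1 ∧ ∀ x < t, l.getD t 0 < l.getD x 0) =>
              by have := hh.1; omega)]
        rw [if_pos (⟨by omega, hc⟩ : (t+1) % 2 = 0 ∧ ∀ x < l.length, t < x →
              l.getD x 0 < l.getD t 0)]
      rw [hx, hB, if_pos (hiff.1 hc)]
    · have hx : xiEntry l t = l.getD t 0 := by
        unfold xiEntry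
        rw [if_neg (fun hh : ((t+1) % 2 = 1 ∧ ∀ x < t, l.getD t 0 < l.getD x 0) =>
              by have := hh.1; omega)]
        rw [if_neg (fun hh : ((t+1) % 2 = 0 ∧ ∀ x < l.length, t < x →
              l.getD x 0 < l.getD t 0) => hc hh.2)]
      rw [hx, hB, if_neg (fun hh => hc (hiff.2 hh))]

lemma xi_eq_xr {l : List ℕ} (hs : l.Pairwise (· ≥ ·)) (hp : ∀ x ∈ l, 0 < x) (κ : ℕ) :
    xi κ l = xr (l.headD 0 + 1) l ++ (if (l.length + κ) % 2 = 1 then [1] else []) := by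
  unfold xi
  congr 1
  rw [← bridge2 (l.headD 0 + 1) l]
  apply List.map_congr_left
  intro t htmem
  exact bridge1 hs hp (List.mem_range.1 htmem)

/-- The invariant bundle: everything true of (suffixes of) images of `Ξ`.
`b` is the phase (`true` = next odd part is a "+1" part), `t` records `κ = 1`,
`V` is a strict upper bound (with gap 2 when `b = false`). -/
structure Bundle (b t : Bool) (V : ℕ) (c : List ℕ) : Prop where
  srt : c.Pairwise (· ≥ ·)
  pos : ∀ x ∈ c, 0 < x
  bnd : ∀ x ∈ c, x < V ∧ (b = false → x + 2 ≤ V)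
  cnt : ∀ j, j % 2 = 0 → Even (c.count j)
  hd  : b = true → c ≠ [] → c.getD 0 0 % 2 = 1
  odd : c.countP (fun x => x % 2 = 1) % 2 = (if t = b then 1 else 0)
  len : c.length % 2 = (if t = b then 1 else 0)
  lst : t = false → c ≠ [] → c.getD (c.length - 1) 0 % 2 = 1
  p3  : ∀ u, 1 ≤ u → u + 1 ≤ (oddParts c).length → u % 2 = (if b then 1 else 0) →
        (oddParts c).getD u 0 < (oddParts c).getD (u - 1) 0
  p4  : ∀ u, 1 ≤ u → u + 1 ≤ (oddParts c).length → u % 2 = (if b then 0 else 1) →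
        ∀ y ∈ c, ¬((oddParts c).getD u 0 < y ∧ y < (oddParts c).getD (u - 1) 0)

lemma forall_mem_iff_getD {c : List ℕ} {P : ℕ → Prop} :
    (∀ y ∈ c, P y) ↔ ∀ k < c.length, P (c.getD k 0) := by
  constructor
  · intro h k hk
    rw [List.getD_eq_getElem _ _ hk]
    exact h _ (List.getElem_mem hk)
  · intro h y hy
    obtain ⟨k, hk, rfl⟩ := List.mem_iff_getElem.1 hy
    have := h k hk
    rwa [List.getD_eq_getElem c 0 hk] at this

lemma getD_last_append {w sub : List ℕ} (h : sub ≠ []) :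
    (w ++ sub).getD ((w ++ sub).length - 1) 0 = sub.getD (sub.length - 1) 0 := by
  have hlen : (w ++ sub).length = w.length + sub.length := List.length_append
  have hsp : 0 < sub.length := List.length_pos_iff.2 h
  rw [hlen, List.getD_append_right _ _ _ _ (by omega)]
  congr 1
  omega

lemma oddParts_append (u v : List ℕ) : oddParts (u ++ v) = oddParts u ++ oddParts v :=
  List.filter_append _ _

lemma oddParts_cons_odd {x : ℕ} (hx : x % 2 = 1) (v : List ℕ) :
    oddParts (x :: v) = x :: oddParts v := by
  unfold oddParts; rw [List.filter_cons_of_pos (by simpa using hx)]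

lemma oddParts_cons_even {x : ℕ} (hx : x % 2 = 0) (v : List ℕ) :
    oddParts (x :: v) = oddParts v := by
  unfold oddParts; rw [List.filter_cons_of_neg (by simp; omega)]

lemma oddParts_replicate_even {a : ℕ} (ha : a % 2 = 0) (k : ℕ) :
    oddParts (List.replicate k a) = [] := by
  induction k with
  | zero => rfl
  | succ n ih => rw [List.replicate_succ, oddParts_cons_even ha, ih]

lemma oddParts_getD_mem {sub : List ℕ} {i : ℕ} (hi : i < (oddParts sub).length) :
    (oddParts sub).getD i 0 ∈ sub ∧ ((oddParts sub).getD i 0) % 2 = 1 := by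
  rw [List.getD_eq_getElem _ _ hi]
  have hmem := List.getElem_mem hi
  have := List.mem_filter.1 hmem
  exact ⟨this.1, by simpa using this.2⟩

lemma sorted_rep_append {k a : ℕ} {v : List ℕ} (hv : v.Pairwise (· ≥ ·))
    (hb : ∀ y ∈ v, y ≤ a) : (List.replicate k a ++ v).Pairwise (· ≥ ·) := by
  rw [List.pairwise_append]
  exact ⟨List.pairwise_replicate.2 (Or.inr le_rfl), hv,
    fun x hx y hy => by rw [List.eq_of_mem_replicate hx]; exact hb y hy⟩

lemma countP_odd_eq (c : List ℕ) :
    c.countP (fun x => x % 2 = 1) = (oddParts c).length := by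
  rw [oddParts, ← List.countP_eq_length_filter]

lemma headD_odd_head {sub : List ℕ} (h : sub ≠ []) (ho : sub.getD 0 0 % 2 = 1) :
    oddParts sub = sub.headD 0 :: oddParts sub.tail ∧ sub.headD 0 % 2 = 1 := by
  cases sub with
  | nil => simp at h
  | cons s r =>
    simp only [List.getD_cons_zero] at ho
    rw [oddParts_cons_odd ho]
    exact ⟨rfl, ho⟩

lemma bundle_block_TT {a k : ℕ} {t : Bool} {V : ℕ} {sub : List ℕ}
    (ha2 : 2 ≤ a) (hae : a % 2 = 0) (haV : a + 2 ≤ V) (hk : k % 2 = 0)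
    (hsub : Bundle true t a sub) :
    Bundle true t V ((a+1) :: (List.replicate k a ++ ((a-1) :: sub))) := by
  have hsublt : ∀ y ∈ sub, y < a := fun y hy => (hsub.bnd y hy).1
  have hodds : oddParts ((a+1) :: (List.replicate k a ++ ((a-1) :: sub)))
      = (a+1) :: ((a-1) :: oddParts sub) := by
    rw [oddParts_cons_odd (by omega), oddParts_append, oddParts_replicate_even hae,
      oddParts_cons_odd (by omega), List.nil_append]
  have hmem : ∀ y, y ∈ (a+1) :: (List.replicate k a ++ ((a-1) :: sub)) →
      (y = a + 1 ∨ y = a ∨ y = a - 1 ∨ y ∈ sub) := by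
    intro y hy
    rcases List.mem_cons.1 hy with h | h
    · exact Or.inl h
    rcases List.mem_append.1 h with h | h
    · exact Or.inr (Or.inl (List.eq_of_mem_replicate h))
    rcases List.mem_cons.1 h with h | h
    · exact Or.inr (Or.inr (Or.inl h))
    · exact Or.inr (Or.inr (Or.inr h))
  have hosmem : ∀ i, i < (oddParts sub).length → (oddParts sub).getD i 0 < a := by
    intro i hi
    exact hsublt _ (oddParts_getD_mem hi).1
  constructor
  case srt =>
    refine List.pairwise_cons.2 ⟨?_, ?_⟩
    · intro y hy
      rcases List.mem_append.1 hy with h | h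
      · rw [List.eq_of_mem_replicate h]; omega
      rcases List.mem_cons.1 h with h | h
      · omega
      · have := hsublt y h; omega
    · refine sorted_rep_append (List.pairwise_cons.2 ⟨?_, hsub.srt⟩) ?_
      · intro y hy; have := hsublt y hy; omega
      · intro y hy
        rcases List.mem_cons.1 hy with h | h
        · omega
        · have := hsublt y h; omega
  case pos =>
    intro y hy
    rcases hmem y hy with h | h | h | h <;> try omega
    exact hsub.pos y h
  case bnd =>
    intro y hy
    refine ⟨?_, by simp⟩
    rcases hmem y hy with h | h | h | h <;> try omega
    have := hsublt y h; omega
  case cnt =>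
    intro j hj
    rw [Nat.even_iff]
    have hcs := Nat.even_iff.1 (hsub.cnt j hj)
    rw [List.count_cons, List.count_append, List.count_cons, List.count_replicate]
    have h1 : ¬(a + 1 = j) := by omega
    have h2 : ¬(a - 1 = j) := by omega
    simp only [h1, h2, if_false, beq_iff_eq]
    split_ifs <;> omega
  case hd => intro _ _; simp only [List.getD_cons_zero]; omega
  case odd =>
    rw [countP_odd_eq, hodds]
    have := hsub.odd
    rw [countP_odd_eq] at this
    simp only [List.length_cons]
    omega
  case len =>
    have := hsub.len
    simp only [List.length_cons, List.length_append, List.length_replicate]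
    omega
  case lst =>
    intro ht hne
    rcases eq_or_ne sub [] with rfl | hsubne
    · have hre : (a+1) :: (List.replicate k a ++ ((a-1) :: ([] : List ℕ)))
          = ((a+1) :: List.replicate k a) ++ [a-1] := by simp
      rw [hre, getD_last_append (by simp)]
      simp only [List.length_singleton, Nat.sub_self, List.getD_cons_zero]
      omega
    · have hre : (a+1) :: (List.replicate k a ++ ((a-1) :: sub))
          = ((a+1) :: (List.replicate k a ++ [a-1])) ++ sub := by simp
      rw [hre, getD_last_append hsubne]
      exact hsub.lst ht hsubne
  case p3 =>
    intro u h1 h2 h3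
    replace h3 : u % 2 = 1 := by simpa using h3
    rw [hodds] at h2 ⊢
    simp only [List.length_cons] at h2
    rcases u with _ | _ | v
    · omega
    · have e1 : ((a+1) :: ((a-1) :: oddParts sub)).getD (0+1) 0 = a - 1 := rfl
      have e2 : ((a+1) :: ((a-1) :: oddParts sub)).getD (0+1-1) 0 = a + 1 := rfl
      rw [e1, e2]; omega
    · rcases v with _ | w
      · omega
      · have e1 : ((a+1) :: ((a-1) :: oddParts sub)).getD (w+1+1+1) 0
            = (oddParts sub).getD (w+1) 0 := rfl
        have e2 : ((a+1) :: ((a-1) :: oddParts sub)).getD (w+1+1+1-1) 0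
            = (oddParts sub).getD w 0 := rfl
        rw [e1, e2]
        have := hsub.p3 (w+1) (by omega) (by omega) (by simp; omega)
        simpa using this
  case p4 =>
    intro u h1 h2 h3 y hy
    replace h3 : u % 2 = 0 := by simpa using h3
    rw [hodds] at h2 ⊢
    simp only [List.length_cons] at h2
    rcases u with _ | _ | v
    · omega
    · omega
    · rcases v with _ | w
      · -- u = 2 : pair (os₀, a-1)
        have e1 : ((a+1) :: ((a-1) :: oddParts sub)).getD (0+1+1) 0
            = (oddParts sub).getD 0 0 := rfl
        have e2 : ((a+1) :: ((a-1) :: oddParts sub)).getD (0+1+1-1) 0 = a - 1 := rfl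
        rw [e1, e2]
        have hosne : (oddParts sub).length ≥ 1 := by omega
        have hsubne : sub ≠ [] := by
          intro h; rw [h] at hosne; simp [oddParts] at hosne
        obtain ⟨ho1, _⟩ := headD_odd_head hsubne (hsub.hd rfl hsubne)
        have hos0 : (oddParts sub).getD 0 0 = sub.headD 0 := by rw [ho1]; rfl
        rcases hmem y hy with h | h | h | h
        · omega
        · omega
        · omega
        · have hyle : y ≤ sub.headD 0 := by
            cases sub with
            | nil => simp at hsubne
            | cons s r =>
              rcases List.mem_cons.1 h with rfl | h'
              · simp
              · simpa using (List.pairwise_cons.1 hsub.srt).1 y h'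
          rw [hos0]
          omega
      · rcases w with _ | x
        · omega
        · have e1 : ((a+1) :: ((a-1) :: oddParts sub)).getD (x+1+1+1+1) 0
              = (oddParts sub).getD (x+2) 0 := rfl
          have e2 : ((a+1) :: ((a-1) :: oddParts sub)).getD (x+1+1+1+1-1) 0
              = (oddParts sub).getD (x+1) 0 := rfl
          rw [e1, e2]
          rcases hmem y hy with h | h | h | h
          · have := hosmem (x+1) (by omega); omega
          · have := hosmem (x+1) (by omega); omega
          · have := hosmem (x+1) (by omega); omega
          · have := hsub.p4 (x+2) (by omega) (by omega) (by simp; omega) y h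
            simpa using this

lemma bundle_block_TF {a k : ℕ} {t : Bool} {V : ℕ} {sub : List ℕ}
    (ha2 : 2 ≤ a) (hae : a % 2 = 0) (haV : a + 2 ≤ V) (hk : k % 2 = 0)
    (hsub : Bundle false t a sub) :
    Bundle true t V ((a+1) :: (List.replicate k a ++ sub)) := by
  have hsublt : ∀ y ∈ sub, y + 2 ≤ a := fun y hy => (hsub.bnd y hy).2 rfl
  have hodds : oddParts ((a+1) :: (List.replicate k a ++ sub))
      = (a+1) :: oddParts sub := by
    rw [oddParts_cons_odd (by omega), oddParts_append, oddParts_replicate_even hae,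
      List.nil_append]
  have hmem : ∀ y, y ∈ (a+1) :: (List.replicate k a ++ sub) →
      (y = a + 1 ∨ y = a ∨ y ∈ sub) := by
    intro y hy
    rcases List.mem_cons.1 hy with h | h
    · exact Or.inl h
    rcases List.mem_append.1 h with h | h
    · exact Or.inr (Or.inl (List.eq_of_mem_replicate h))
    · exact Or.inr (Or.inr h)
  have hosmem : ∀ i, i < (oddParts sub).length → (oddParts sub).getD i 0 + 2 ≤ a := by
    intro i hi
    exact hsublt _ (oddParts_getD_mem hi).1
  constructor
  case srt =>
    refine List.pairwise_cons.2 ⟨?_, ?_⟩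
    · intro y hy
      rcases List.mem_append.1 hy with h | h
      · rw [List.eq_of_mem_replicate h]; omega
      · have := hsublt y h; omega
    · exact sorted_rep_append hsub.srt (fun y hy => by have := hsublt y hy; omega)
  case pos =>
    intro y hy
    rcases hmem y hy with h | h | h <;> try omega
    exact hsub.pos y h
  case bnd =>
    intro y hy
    refine ⟨?_, by simp⟩
    rcases hmem y hy with h | h | h <;> try omega
    have := hsublt y h; omega
  case cnt =>
    intro j hj
    rw [Nat.even_iff]
    have hcs := Nat.even_iff.1 (hsub.cnt j hj)
    rw [List.count_cons, List.count_append, List.count_replicate]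
    have h1 : ¬(a + 1 = j) := by omega
    simp only [h1, if_false, beq_iff_eq]
    split_ifs <;> omega
  case hd => intro _ _; simp only [List.getD_cons_zero]; omega
  case odd =>
    have hs := hsub.odd
    rw [countP_odd_eq] at hs ⊢
    rw [hodds]
    simp only [List.length_cons]
    cases t <;> simp at hs ⊢ <;> omega
  case len =>
    have := hsub.len
    simp only [List.length_cons, List.length_append, List.length_replicate]
    cases t <;> simp at this ⊢ <;> omega
  case lst =>
    intro ht hne
    rcases eq_or_ne sub [] with rfl | hsubne
    · exfalso
      have := hsub.len
      rw [ht] at this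
      simp at this
    · have hre : (a+1) :: (List.replicate k a ++ sub)
          = ((a+1) :: List.replicate k a) ++ sub := by simp
      rw [hre, getD_last_append hsubne]
      exact hsub.lst ht hsubne
  case p3 =>
    intro u h1 h2 h3
    replace h3 : u % 2 = 1 := by simpa using h3
    rw [hodds] at h2 ⊢
    simp only [List.length_cons] at h2
    rcases u with _ | _ | v
    · omega
    · have e1 : ((a+1) :: oddParts sub).getD (0+1) 0 = (oddParts sub).getD 0 0 := rfl
      have e2 : ((a+1) :: oddParts sub).getD (0+1-1) 0 = a + 1 := rfl
      rw [e1, e2]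
      have := hosmem 0 (by omega); omega
    · have e1 : ((a+1) :: oddParts sub).getD (v+1+1) 0 = (oddParts sub).getD (v+1) 0 := rfl
      have e2 : ((a+1) :: oddParts sub).getD (v+1+1-1) 0 = (oddParts sub).getD v 0 := rfl
      rw [e1, e2]
      have := hsub.p3 (v+1) (by omega) (by omega) (by simp; omega)
      simpa using this
  case p4 =>
    intro u h1 h2 h3 y hy
    replace h3 : u % 2 = 0 := by simpa using h3
    rw [hodds] at h2 ⊢
    simp only [List.length_cons] at h2
    rcases u with _ | _ | v
    · omega
    · omega
    · have e1 : ((a+1) :: oddParts sub).getD (v+1+1) 0 = (oddParts sub).getD (v+1) 0 := rfl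
      have e2 : ((a+1) :: oddParts sub).getD (v+1+1-1) 0 = (oddParts sub).getD v 0 := rfl
      rw [e1, e2]
      rcases hmem y hy with h | h | h
      · have := hosmem v (by omega); omega
      · have := hosmem v (by omega); omega
      · have := hsub.p4 (v+1) (by omega) (by omega) (by simp; omega) y h
        simpa using this

lemma bundle_block_FT {a k : ℕ} {t : Bool} {V : ℕ} {sub : List ℕ}
    (ha2 : 2 ≤ a) (hae : a % 2 = 0) (haV : a + 2 ≤ V) (hk : k % 2 = 0)
    (hsub : Bundle true t a sub) :
    Bundle false t V (List.replicate k a ++ ((a-1) :: sub)) := by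
  have hsublt : ∀ y ∈ sub, y < a := fun y hy => (hsub.bnd y hy).1
  have hodds : oddParts (List.replicate k a ++ ((a-1) :: sub))
      = (a-1) :: oddParts sub := by
    rw [oddParts_append, oddParts_replicate_even hae, oddParts_cons_odd (by omega),
      List.nil_append]
  have hmem : ∀ y, y ∈ List.replicate k a ++ ((a-1) :: sub) →
      (y = a ∨ y = a - 1 ∨ y ∈ sub) := by
    intro y hy
    rcases List.mem_append.1 hy with h | h
    · exact Or.inl (List.eq_of_mem_replicate h)
    rcases List.mem_cons.1 h with h | h
    · exact Or.inr (Or.inl h)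
    · exact Or.inr (Or.inr h)
  have hosmem : ∀ i, i < (oddParts sub).length → (oddParts sub).getD i 0 < a := by
    intro i hi
    exact hsublt _ (oddParts_getD_mem hi).1
  constructor
  case srt =>
    refine sorted_rep_append (List.pairwise_cons.2 ⟨?_, hsub.srt⟩) ?_
    · intro y hy; have := hsublt y hy; omega
    · intro y hy
      rcases List.mem_cons.1 hy with h | h
      · omega
      · have := hsublt y h; omega
  case pos =>
    intro y hy
    rcases hmem y hy with h | h | h <;> try omega
    exact hsub.pos y h
  case bnd =>
    intro y hy
    rcases hmem y hy with h | h | h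
    · constructor <;> omega
    · constructor <;> omega
    · have := hsublt y h; constructor <;> omega
  case cnt =>
    intro j hj
    rw [Nat.even_iff]
    have hcs := Nat.even_iff.1 (hsub.cnt j hj)
    rw [List.count_append, List.count_cons, List.count_replicate]
    have h2 : ¬(a - 1 = j) := by omega
    simp only [h2, if_false, beq_iff_eq]
    split_ifs <;> omega
  case hd => intro h; simp at h
  case odd =>
    have hs := hsub.odd
    rw [countP_odd_eq] at hs ⊢
    rw [hodds]
    simp only [List.length_cons]
    cases t <;> simp at hs ⊢ <;> omega
  case len =>
    have := hsub.len
    simp only [List.length_cons, List.length_append, List.length_replicate]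
    cases t <;> simp at this ⊢ <;> omega
  case lst =>
    intro ht hne
    rcases eq_or_ne sub [] with rfl | hsubne
    · have hre : List.replicate k a ++ ((a-1) :: ([] : List ℕ))
          = List.replicate k a ++ [a-1] := by simp
      rw [hre, getD_last_append (by simp)]
      simp only [List.length_singleton, Nat.sub_self, List.getD_cons_zero]
      omega
    · have hre : List.replicate k a ++ ((a-1) :: sub)
          = (List.replicate k a ++ [a-1]) ++ sub := by simp
      rw [hre, getD_last_append hsubne]
      exact hsub.lst ht hsubne
  case p3 =>
    intro u h1 h2 h3
    replace h3 : u % 2 = 0 := by simpa using h3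
    rw [hodds] at h2 ⊢
    simp only [List.length_cons] at h2
    rcases u with _ | _ | v
    · omega
    · omega
    · have e1 : ((a-1) :: oddParts sub).getD (v+1+1) 0 = (oddParts sub).getD (v+1) 0 := rfl
      have e2 : ((a-1) :: oddParts sub).getD (v+1+1-1) 0 = (oddParts sub).getD v 0 := rfl
      rw [e1, e2]
      have := hsub.p3 (v+1) (by omega) (by omega) (by simp; omega)
      simpa using this
  case p4 =>
    intro u h1 h2 h3 y hy
    replace h3 : u % 2 = 1 := by simpa using h3
    rw [hodds] at h2 ⊢
    simp only [List.length_cons] at h2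
    rcases u with _ | _ | v
    · omega
    · -- u = 1 : pair (os₀, a-1)
      have e1 : ((a-1) :: oddParts sub).getD (0+1) 0 = (oddParts sub).getD 0 0 := rfl
      have e2 : ((a-1) :: oddParts sub).getD (0+1-1) 0 = a - 1 := rfl
      rw [e1, e2]
      have hosne : (oddParts sub).length ≥ 1 := by omega
      have hsubne : sub ≠ [] := by
        intro h; rw [h] at hosne; simp [oddParts] at hosne
      obtain ⟨ho1, _⟩ := headD_odd_head hsubne (hsub.hd rfl hsubne)
      have hos0 : (oddParts sub).getD 0 0 = sub.headD 0 := by rw [ho1]; rfl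
      rcases hmem y hy with h | h | h
      · omega
      · omega
      · have hyle : y ≤ sub.headD 0 := by
          cases sub with
          | nil => simp at hsubne
          | cons s r =>
            rcases List.mem_cons.1 h with rfl | h'
            · simp
            · simpa using (List.pairwise_cons.1 hsub.srt).1 y h'
        rw [hos0]
        omega
    · rcases v with _ | w
      · omega
      · have e1 : ((a-1) :: oddParts sub).getD (w+1+1+1) 0
            = (oddParts sub).getD (w+2) 0 := rfl
        have e2 : ((a-1) :: oddParts sub).getD (w+1+1+1-1) 0
            = (oddParts sub).getD (w+1) 0 := rfl
        rw [e1, e2]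
        rcases hmem y hy with h | h | h
        · have := hosmem (w+1) (by omega); omega
        · have := hosmem (w+1) (by omega); omega
        · have := hsub.p4 (w+2) (by omega) (by omega) (by simp; omega) y h
          simpa using this

lemma bundle_block_FF {a k : ℕ} {t : Bool} {V : ℕ} {sub : List ℕ}
    (ha2 : 2 ≤ a) (hae : a % 2 = 0) (haV : a + 2 ≤ V) (hk : k % 2 = 0)
    (hsub : Bundle false t a sub) :
    Bundle false t V (List.replicate k a ++ sub) := by
  have hsublt : ∀ y ∈ sub, y + 2 ≤ a := fun y hy => (hsub.bnd y hy).2 rfl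
  have hodds : oddParts (List.replicate k a ++ sub) = oddParts sub := by
    rw [oddParts_append, oddParts_replicate_even hae, List.nil_append]
  have hmem : ∀ y, y ∈ List.replicate k a ++ sub → (y = a ∨ y ∈ sub) := by
    intro y hy
    rcases List.mem_append.1 hy with h | h
    · exact Or.inl (List.eq_of_mem_replicate h)
    · exact Or.inr h
  have hosmem : ∀ i, i < (oddParts sub).length → (oddParts sub).getD i 0 + 2 ≤ a := by
    intro i hi
    exact hsublt _ (oddParts_getD_mem hi).1
  constructor
  case srt =>
    exact sorted_rep_append hsub.srt (fun y hy => by have := hsublt y hy; omega)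
  case pos =>
    intro y hy
    rcases hmem y hy with h | h
    · omega
    · exact hsub.pos y h
  case bnd =>
    intro y hy
    rcases hmem y hy with h | h
    · constructor <;> omega
    · have := hsublt y h; constructor <;> omega
  case cnt =>
    intro j hj
    rw [Nat.even_iff]
    have hcs := Nat.even_iff.1 (hsub.cnt j hj)
    rw [List.count_append, List.count_replicate]
    simp only [beq_iff_eq]
    split_ifs <;> omega
  case hd => intro h; simp at h
  case odd =>
    have hs := hsub.odd
    rw [countP_odd_eq] at hs ⊢
    rw [hodds]
    exact hs
  case len =>
    have := hsub.len
    simp only [List.length_append, List.length_replicate]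
    cases t <;> simp at this ⊢ <;> omega
  case lst =>
    intro ht hne
    rcases eq_or_ne sub [] with rfl | hsubne
    · exfalso
      have := hsub.len
      rw [ht] at this
      simp at this
    · rw [getD_last_append hsubne]
      exact hsub.lst ht hsubne
  case p3 =>
    intro u h1 h2 h3
    rw [hodds] at h2 ⊢
    exact hsub.p3 u h1 h2 h3
  case p4 =>
    intro u h1 h2 h3 y hy
    replace h3 : u % 2 = 1 := by simpa using h3
    rw [hodds] at h2 ⊢
    rcases hmem y hy with h | h
    · have h4 := hosmem (u-1) (by omega)
      subst h
      omega
    · exact hsub.p4 u h1 h2 (by simp; omega) y h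

lemma bundle_nil {b t : Bool} (V : ℕ) (h : t ≠ b) : Bundle b t V [] := by
  constructor
  case srt => simp
  case pos => simp
  case bnd => simp
  case cnt => simp
  case hd => simp
  case odd => simp [if_neg h]
  case len => simp [if_neg h]
  case lst => simp
  case p3 => intro u h1 h2 h3; simp [oddParts] at h2
  case p4 => intro u h1 h2 h3; simp [oddParts] at h2

lemma bundle_one {V : ℕ} (hV : 2 ≤ V) : Bundle true true V [1] := by
  constructor
  case srt => simp
  case pos => simp
  case bnd =>
    intro x hx
    simp at hx
    subst hx
    exact ⟨by omega, by simp⟩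
  case cnt =>
    intro j hj
    have : ([1] : List ℕ).count j = 0 := by
      rw [List.count_eq_zero]
      simp; omega
    simp [this]
  case hd => simp
  case odd => simp
  case len => simp
  case lst => simp
  case p3 =>
    intro u h1 h2 h3
    have : (oddParts [1]).length = 1 := by simp [oddParts, List.filter]
    omega
  case p4 =>
    intro u h1 h2 h3
    have : (oddParts [1]).length = 1 := by simp [oddParts, List.filter]
    omega

lemma bundle_base (b t : Bool) (V : ℕ) (hV : 2 ≤ V) (hbt : t = false → b = true) :
    Bundle b t V (Tl b t 0) := by
  cases b
  · cases t
    · exact absurd (hbt rfl) (by simp)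
    · have h : Tl false true 0 = [] := by simp [Tl]
      rw [h]; exact bundle_nil V (by simp)
  · cases t
    · have h : Tl true false 0 = [] := by simp [Tl]
      rw [h]; exact bundle_nil V (by simp)
    · have h : Tl true true 0 = [1] := by simp [Tl]
      rw [h]; exact bundle_one hV

lemma Tl_shift {b b' : Bool} (t : Bool) {n n' : ℕ}
    (h : n % 2 = (if b then 0 else 1) ↔ n' % 2 = (if b' then 0 else 1)) :
    Tl b t n = Tl b' t n' := by
  unfold Tl
  exact if_congr (and_congr_right (fun _ => h)) rfl rfl

set_option maxHeartbeats 1000000 in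
lemma FWD : ∀ (n : ℕ) (l : List ℕ), l.length ≤ n → l.Pairwise (· ≥ ·) →
    (∀ x ∈ l, x % 2 = 0) → (∀ x ∈ l, 0 < x) → ∀ (V : ℕ) (b t : Bool) (p : ℕ),
    (∀ x ∈ l, x + 2 ≤ V) → 2 ≤ V → (b = true → l.headD 0 < p) →
    (t = false → (b = true ↔ Even l.length)) →
    Bundle b t V ((if b then xr p l else xrO l) ++ Tl b t l.length) := by
  intro n
  induction n with
  | zero =>
    intro l hlen _ _ _ V b t p _ hV _ hpar
    have : l = [] := List.length_eq_zero_iff.1 (by omega)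
    subst this
    have hb : t = false → b = true := by
      intro ht; exact (hpar ht).2 (by simp)
    cases b <;> simp only [xr, xrO, if_true, if_false, List.nil_append, List.length_nil] <;>
      exact bundle_base _ _ _ hV hb
  | succ n ih =>
    intro l hlen hsrt hev hpos V b t p hbnd hV hhp hpar
    rcases eq_or_ne l [] with rfl | hlne
    · have hb : t = false → b = true := by
        intro ht; exact (hpar ht).2 (by simp)
      cases b <;> simp only [xr, xrO, if_true, if_false, List.nil_append, List.length_nil] <;>
        exact bundle_base _ _ _ hV hb
    · -- peel the leading run
      set a := l.headD 0 with ha_def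
      have hamem : a ∈ l := by
        cases l with
        | nil => simp at hlne
        | cons x s => simp [ha_def]
      have hale : ∀ x ∈ l, x ≤ a := by
        cases l with
        | nil => simp at hlne
        | cons x s =>
          intro y hy
          rcases List.mem_cons.1 hy with rfl | h
          · simp [ha_def]
          · simpa [ha_def] using (List.pairwise_cons.1 hsrt).1 y h
      obtain ⟨rest, hl, hrsrt, hrlt, hrlen⟩ := run_peel l hsrt a hale
      set m := l.count a with hm_def
      have hm1 : 1 ≤ m := List.count_pos_iff.2 hamem
      have hae : a % 2 = 0 := hev a hamem
      have hap : 0 < a := hpos a hamem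
      have ha2 : 2 ≤ a := by omega
      have haV : a + 2 ≤ V := hbnd a hamem
      have hrhd : rest.headD 0 < a := by
        cases rest with
        | nil => simpa using hap
        | cons x s => simpa using hrlt x (by simp)
      have hrmem : ∀ x ∈ rest, x ∈ l := by
        intro x hx; rw [hl]; exact List.mem_append_right _ hx
      have hrev : ∀ x ∈ rest, x % 2 = 0 := fun x hx => hev x (hrmem x hx)
      have hrpos : ∀ x ∈ rest, 0 < x := fun x hx => hpos x (hrmem x hx)
      have hrbnd : ∀ x ∈ rest, x + 2 ≤ a := by
        intro x hx
        have h1 := hrlt x hx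
        have h2 := hrev x hx
        omega
      have hrn : rest.length ≤ n := by omega
      have hllen : l.length = m + rest.length := by omega
      have hl2 : l = List.replicate m a ++ rest := hl
      rcases Nat.even_or_odd m with hme | hmo
      · -- m even
        obtain ⟨u, hu⟩ : ∃ u, m = 2*u + 2 := by
          rcases hme with ⟨w, hw⟩; exact ⟨w - 1, by omega⟩
        cases b with
        | true =>
          have hsub := ih rest hrn hrsrt hrev hrpos a true t a hrbnd ha2
            (fun _ => hrhd)
            (by intro ht
                have h := hpar ht
                simp only [Nat.even_iff] at h ⊢
                simp at h ⊢
                omega)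
          have htl : Tl true t l.length = Tl true t rest.length :=
            Tl_shift t (by simp; omega)
          rw [if_pos rfl, htl, hl2, hu, xr_peel_even u p a rest hap hrhd,
            if_pos (show a < p by simpa [ha_def] using hhp rfl)]
          have hassoc : ((a+1) :: (List.replicate (2*u) a ++ ((a-1) :: xr a rest)))
                ++ Tl true t rest.length
              = (a+1) :: (List.replicate (2*u) a ++
                  ((a-1) :: (xr a rest ++ Tl true t rest.length))) := by
            simp
          rw [hassoc]
          refine bundle_block_TT ha2 hae haV (by omega) ?_
          simpa using hsub
        | false =>
          have hsub := ih rest hrn hrsrt hrev hrpos a false t a hrbnd ha2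
            (by intro h; simp at h)
            (by intro ht
                have h := hpar ht
                simp only [Nat.even_iff] at h ⊢
                simp at h ⊢
                omega)
          have htl : Tl false t l.length = Tl false t rest.length :=
            Tl_shift t (by simp; omega)
          rw [if_neg (by simp), htl, hl2, hu, xrO_peel_even u a rest hap hrhd]
          have hassoc : (List.replicate (2*u+2) a ++ xrO rest) ++ Tl false t rest.length
              = List.replicate (2*u+2) a ++ (xrO rest ++ Tl false t rest.length) := by
            simp
          rw [hassoc]
          refine bundle_block_FF ha2 hae haV (by omega) ?_
          simpa using hsub
      · -- m odd
        obtain ⟨u, hu⟩ : ∃ u, m = 2*u + 1 := by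
          rcases hmo with ⟨w, hw⟩; exact ⟨w, by omega⟩
        cases b with
        | true =>
          have hsub := ih rest hrn hrsrt hrev hrpos a false t a hrbnd ha2
            (by intro h; simp at h)
            (by intro ht
                have h := hpar ht
                simp only [Nat.even_iff] at h ⊢
                simp at h ⊢
                omega)
          have htl : Tl true t l.length = Tl false t rest.length :=
            Tl_shift t (by simp; omega)
          rw [if_pos rfl, htl, hl2, hu, xr_peel_odd u p a rest hap hrhd,
            if_pos (show a < p by simpa [ha_def] using hhp rfl)]
          have hassoc : ((a+1) :: (List.replicate (2*u) a ++ xrO rest))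
                ++ Tl false t rest.length
              = (a+1) :: (List.replicate (2*u) a ++
                  (xrO rest ++ Tl false t rest.length)) := by
            simp
          rw [hassoc]
          refine bundle_block_TF ha2 hae haV (by omega) ?_
          simpa using hsub
        | false =>
          have hsub := ih rest hrn hrsrt hrev hrpos a true t a hrbnd ha2
            (fun _ => hrhd)
            (by intro ht
                have h := hpar ht
                simp only [Nat.even_iff] at h ⊢
                simp at h ⊢
                omega)
          have htl : Tl false t l.length = Tl true t rest.length :=
            Tl_shift t (by simp; omega)
          rw [if_neg (by simp), htl, hl2, hu, xrO_peel_odd u a rest hap hrhd]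
          have hassoc : (List.replicate (2*u) a ++ ((a-1) :: xr a rest))
                ++ Tl true t rest.length
              = List.replicate (2*u) a ++
                  ((a-1) :: (xr a rest ++ Tl true t rest.length)) := by
            simp
          rw [hassoc]
          refine bundle_block_FT ha2 hae haV (by omega) ?_
          simpa using hsub

lemma all_even_of_oddParts_nil {e : List ℕ} (h : oddParts e = []) :
    ∀ y ∈ e, y % 2 = 0 := by
  intro y hy
  have := List.filter_eq_nil_iff.1 h y hy
  simp at this
  omega

lemma getD_last_mem {e : List ℕ} (h : e ≠ []) : e.getD (e.length - 1) 0 ∈ e := by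
  have hlen : e.length - 1 < e.length := by
    cases e with
    | nil => simp at h
    | cons z w => simp
  rw [List.getD_eq_getElem _ _ hlen]
  exact List.getElem_mem _

lemma sorted_le_head {e : List ℕ} (hs : e.Pairwise (· ≥ ·)) :
    ∀ y ∈ e, y ≤ e.headD 0 := by
  cases e with
  | nil => simp
  | cons z w =>
    intro y hy
    rcases List.mem_cons.1 hy with rfl | h
    · simp
    · simpa using (List.pairwise_cons.1 hs).1 y h

lemma bundle_unblock_TT {a q : ℕ} {t : Bool} {V : ℕ} {e : List ℕ}
    (ha2 : 2 ≤ a) (hae : a % 2 = 0) (hqe : q % 2 = 0) (he : ∀ y ∈ e, y < a)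
    (parent : Bundle true t V ((a+1) :: (List.replicate q a ++ ((a-1) :: e)))) :
    Bundle true t a e := by
  set comp := (a+1) :: (List.replicate q a ++ ((a-1) :: e)) with hcomp
  have hre : comp = ((a+1) :: (List.replicate q a ++ [a-1])) ++ e := by simp [hcomp]
  have hmem : ∀ y ∈ e, y ∈ comp := by
    intro y hy; rw [hre]; exact List.mem_append_right _ hy
  have hodds : oddParts comp = (a+1) :: ((a-1) :: oddParts e) := by
    rw [hcomp, oddParts_cons_odd (by omega), oddParts_append, oddParts_replicate_even hae,
      oddParts_cons_odd (by omega), List.nil_append]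
  have hlenc : comp.length = 2 + q + e.length := by simp [hcomp]; omega
  have hesrt : e.Pairwise (· ≥ ·) := by
    have := parent.srt
    rw [hre] at this
    exact (List.pairwise_append.1 this).2.1
  constructor
  case srt => exact hesrt
  case pos => exact fun y hy => parent.pos y (hmem y hy)
  case bnd => exact fun y hy => ⟨he y hy, by simp⟩
  case cnt =>
    intro j hj
    have hc := parent.cnt j hj
    rw [Nat.even_iff] at hc ⊢
    rw [hcomp, List.count_cons, List.count_append, List.count_cons,
      List.count_replicate] at hc
    have h1 : ¬(a + 1 = j) := by omega
    have h2 : ¬(a - 1 = j) := by omega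
    simp only [h1, h2, if_false, beq_iff_eq] at hc
    split_ifs at hc <;> omega
  case hd =>
    intro _ hene
    by_contra hodd
    have hz : e.getD 0 0 % 2 = 0 := by omega
    have hzmem : e.getD 0 0 ∈ e := by
      have : 0 < e.length := List.length_pos_iff.2 hene
      rw [List.getD_eq_getElem _ _ this]; exact List.getElem_mem _
    rcases eq_or_ne (oddParts e) [] with hoe | hoe
    · -- all of e even; refute by parity (odd) and last (lst)
      have hall := all_even_of_oddParts_nil hoe
      have ht : t = false := by
        have := parent.odd
        rw [countP_odd_eq, hodds, hoe] at this
        simp at this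
        rcases t with _ | _ <;> simp at this ⊢
      have hlst := parent.lst ht (by simp [hcomp])
      rw [hre, getD_last_append hene] at hlst
      have := hall _ (getD_last_mem hene)
      omega
    · have hone : 1 ≤ (oddParts e).length := by
        cases h : oddParts e with
        | nil => exact absurd h hoe
        | cons z w => simp [h]
      have hp4 := parent.p4 2 (by omega) (by rw [hodds]; simp; omega) (by simp)
        (e.getD 0 0) (hmem _ hzmem)
      rw [hodds] at hp4
      have e1 : ((a+1) :: ((a-1) :: oddParts e)).getD 2 0 = (oddParts e).getD 0 0 := rfl
      have e2 : ((a+1) :: ((a-1) :: oddParts e)).getD (2-1) 0 = a - 1 := rfl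
      rw [e1, e2] at hp4
      have hw := oddParts_getD_mem (show 0 < (oddParts e).length by omega)
      have hwle : (oddParts e).getD 0 0 ≤ e.getD 0 0 := by
        have h1 := sorted_le_head hesrt _ hw.1
        have h2 : e.getD 0 0 = e.headD 0 := by cases e <;> rfl
        omega
      have hlt := he _ hzmem
      omega
  case odd =>
    have := parent.odd
    rw [countP_odd_eq, hodds] at this
    rw [countP_odd_eq]
    simp only [List.length_cons] at this
    omega
  case len =>
    have := parent.len
    rw [hlenc] at this
    omega
  case lst =>
    intro ht hene
    have hlst := parent.lst ht (by simp [hcomp])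
    rwa [hre, getD_last_append hene] at hlst
  case p3 =>
    intro u h1 h2 h3
    replace h3 : u % 2 = 1 := by simpa using h3
    have := parent.p3 (u+2) (by omega) (by rw [hodds]; simp; omega) (by simp; omega)
    rw [hodds] at this
    have e1 : ((a+1) :: ((a-1) :: oddParts e)).getD (u+2) 0 = (oddParts e).getD u 0 := rfl
    have e2 : ((a+1) :: ((a-1) :: oddParts e)).getD (u+2-1) 0 = (oddParts e).getD (u-1) 0 := by
      obtain ⟨v, rfl⟩ : ∃ v, u = v + 1 := ⟨u - 1, by omega⟩
      rfl
    rwa [e1, e2] at this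
  case p4 =>
    intro u h1 h2 h3 y hy
    replace h3 : u % 2 = 0 := by simpa using h3
    have := parent.p4 (u+2) (by omega) (by rw [hodds]; simp; omega) (by simp; omega)
      y (hmem y hy)
    rw [hodds] at this
    have e1 : ((a+1) :: ((a-1) :: oddParts e)).getD (u+2) 0 = (oddParts e).getD u 0 := rfl
    have e2 : ((a+1) :: ((a-1) :: oddParts e)).getD (u+2-1) 0 = (oddParts e).getD (u-1) 0 := by
      obtain ⟨v, rfl⟩ : ∃ v, u = v + 1 := ⟨u - 1, by omega⟩
      rfl
    rwa [e1, e2] at this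

lemma bundle_unblock_TF {a q : ℕ} {t : Bool} {V : ℕ} {d : List ℕ}
    (ha2 : 2 ≤ a) (hae : a % 2 = 0) (hqe : q % 2 = 0) (hd2 : ∀ y ∈ d, y + 2 ≤ a)
    (parent : Bundle true t V ((a+1) :: (List.replicate q a ++ d))) :
    Bundle false t a d := by
  set comp := (a+1) :: (List.replicate q a ++ d) with hcomp
  have hre : comp = ((a+1) :: List.replicate q a) ++ d := by simp [hcomp]
  have hmem : ∀ y ∈ d, y ∈ comp := by
    intro y hy; rw [hre]; exact List.mem_append_right _ hy
  have hodds : oddParts comp = (a+1) :: oddParts d := by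
    rw [hcomp, oddParts_cons_odd (by omega), oddParts_append, oddParts_replicate_even hae,
      List.nil_append]
  have hlenc : comp.length = 1 + q + d.length := by simp [hcomp]; omega
  have hdsrt : d.Pairwise (· ≥ ·) := by
    have := parent.srt
    rw [hre] at this
    exact (List.pairwise_append.1 this).2.1
  constructor
  case srt => exact hdsrt
  case pos => exact fun y hy => parent.pos y (hmem y hy)
  case bnd => exact fun y hy => ⟨by have := hd2 y hy; omega, fun _ => hd2 y hy⟩
  case cnt =>
    intro j hj
    have hc := parent.cnt j hj
    rw [Nat.even_iff] at hc ⊢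
    rw [hcomp, List.count_cons, List.count_append, List.count_replicate] at hc
    have h1 : ¬(a + 1 = j) := by omega
    simp only [h1, if_false, beq_iff_eq] at hc
    split_ifs at hc <;> omega
  case hd => intro h; simp at h
  case odd =>
    have := parent.odd
    rw [countP_odd_eq, hodds] at this
    rw [countP_odd_eq]
    simp only [List.length_cons] at this
    rcases t with _ | _ <;> simp at this ⊢ <;> omega
  case len =>
    have := parent.len
    rw [hlenc] at this
    rcases t with _ | _ <;> simp at this ⊢ <;> omega
  case lst =>
    intro ht hene
    have hlst := parent.lst ht (by simp [hcomp])
    rwa [hre, getD_last_append hene] at hlst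
  case p3 =>
    intro u h1 h2 h3
    replace h3 : u % 2 = 0 := by simpa using h3
    have := parent.p3 (u+1) (by omega) (by rw [hodds]; simp; omega) (by simp; omega)
    rw [hodds] at this
    have e1 : ((a+1) :: oddParts d).getD (u+1) 0 = (oddParts d).getD u 0 := rfl
    have e2 : ((a+1) :: oddParts d).getD (u+1-1) 0 = (oddParts d).getD (u-1) 0 := by
      obtain ⟨v, rfl⟩ : ∃ v, u = v + 1 := ⟨u - 1, by omega⟩
      rfl
    rwa [e1, e2] at this
  case p4 =>
    intro u h1 h2 h3 y hy
    replace h3 : u % 2 = 1 := by simpa using h3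
    have := parent.p4 (u+1) (by omega) (by rw [hodds]; simp; omega) (by simp; omega)
      y (hmem y hy)
    rw [hodds] at this
    have e1 : ((a+1) :: oddParts d).getD (u+1) 0 = (oddParts d).getD u 0 := rfl
    have e2 : ((a+1) :: oddParts d).getD (u+1-1) 0 = (oddParts d).getD (u-1) 0 := by
      obtain ⟨v, rfl⟩ : ∃ v, u = v + 1 := ⟨u - 1, by omega⟩
      rfl
    rwa [e1, e2] at this

lemma bundle_unblock_FT {a q : ℕ} {t : Bool} {V : ℕ} {e : List ℕ}
    (ha2 : 2 ≤ a) (hae : a % 2 = 0) (hqe : q % 2 = 0) (he : ∀ y ∈ e, y < a)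
    (parent : Bundle false t V (List.replicate q a ++ ((a-1) :: e))) :
    Bundle true t a e := by
  set comp := List.replicate q a ++ ((a-1) :: e) with hcomp
  have hre : comp = (List.replicate q a ++ [a-1]) ++ e := by simp [hcomp]
  have hmem : ∀ y ∈ e, y ∈ comp := by
    intro y hy; rw [hre]; exact List.mem_append_right _ hy
  have hodds : oddParts comp = (a-1) :: oddParts e := by
    rw [hcomp, oddParts_append, oddParts_replicate_even hae,
      oddParts_cons_odd (by omega), List.nil_append]
  have hlenc : comp.length = 1 + q + e.length := by simp [hcomp]; omega
  have hcompne : comp ≠ [] := by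
    rw [hre]
    intro hh
    have := (List.append_eq_nil_iff.1 hh).1
    have := (List.append_eq_nil_iff.1 this).2
    simp at this
  have hesrt : e.Pairwise (· ≥ ·) := by
    have := parent.srt
    rw [hre] at this
    exact (List.pairwise_append.1 this).2.1
  constructor
  case srt => exact hesrt
  case pos => exact fun y hy => parent.pos y (hmem y hy)
  case bnd => exact fun y hy => ⟨he y hy, by simp⟩
  case cnt =>
    intro j hj
    have hc := parent.cnt j hj
    rw [Nat.even_iff] at hc ⊢
    rw [hcomp, List.count_append, List.count_cons, List.count_replicate] at hc
    have h2 : ¬(a - 1 = j) := by omega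
    simp only [h2, if_false, beq_iff_eq] at hc
    split_ifs at hc <;> omega
  case hd =>
    intro _ hene
    by_contra hodd
    have hz : e.getD 0 0 % 2 = 0 := by omega
    have hzmem : e.getD 0 0 ∈ e := by
      have : 0 < e.length := List.length_pos_iff.2 hene
      rw [List.getD_eq_getElem _ _ this]; exact List.getElem_mem _
    rcases eq_or_ne (oddParts e) [] with hoe | hoe
    · have hall := all_even_of_oddParts_nil hoe
      have ht : t = false := by
        have := parent.odd
        rw [countP_odd_eq, hodds, hoe] at this
        simp at this
        rcases t with _ | _ <;> simp at this ⊢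
      have hlst := parent.lst ht hcompne
      rw [hre, getD_last_append hene] at hlst
      have := hall _ (getD_last_mem hene)
      omega
    · have hone : 1 ≤ (oddParts e).length := by
        cases h : oddParts e with
        | nil => exact absurd h hoe
        | cons z w => simp [h]
      have hp4 := parent.p4 1 (by omega) (by rw [hodds]; simp; omega) (by simp)
        (e.getD 0 0) (hmem _ hzmem)
      rw [hodds] at hp4
      have e1 : ((a-1) :: oddParts e).getD 1 0 = (oddParts e).getD 0 0 := rfl
      have e2 : ((a-1) :: oddParts e).getD (1-1) 0 = a - 1 := rfl
      rw [e1, e2] at hp4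
      have hw := oddParts_getD_mem (show 0 < (oddParts e).length by omega)
      have hwle : (oddParts e).getD 0 0 ≤ e.getD 0 0 := by
        have h1 := sorted_le_head hesrt _ hw.1
        have h2 : e.getD 0 0 = e.headD 0 := by cases e <;> rfl
        omega
      have hlt := he _ hzmem
      omega
  case odd =>
    have := parent.odd
    rw [countP_odd_eq, hodds] at this
    rw [countP_odd_eq]
    simp only [List.length_cons] at this
    rcases t with _ | _ <;> simp at this ⊢ <;> omega
  case len =>
    have := parent.len
    rw [hlenc] at this
    rcases t with _ | _ <;> simp at this ⊢ <;> omega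
  case lst =>
    intro ht hene
    have hlst := parent.lst ht hcompne
    rwa [hre, getD_last_append hene] at hlst
  case p3 =>
    intro u h1 h2 h3
    replace h3 : u % 2 = 1 := by simpa using h3
    have := parent.p3 (u+1) (by omega) (by rw [hodds]; simp; omega) (by simp; omega)
    rw [hodds] at this
    have e1 : ((a-1) :: oddParts e).getD (u+1) 0 = (oddParts e).getD u 0 := rfl
    have e2 : ((a-1) :: oddParts e).getD (u+1-1) 0 = (oddParts e).getD (u-1) 0 := by
      obtain ⟨v, rfl⟩ : ∃ v, u = v + 1 := ⟨u - 1, by omega⟩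
      rfl
    rwa [e1, e2] at this
  case p4 =>
    intro u h1 h2 h3 y hy
    replace h3 : u % 2 = 0 := by simpa using h3
    have := parent.p4 (u+1) (by omega) (by rw [hodds]; simp; omega) (by simp; omega)
      y (hmem y hy)
    rw [hodds] at this
    have e1 : ((a-1) :: oddParts e).getD (u+1) 0 = (oddParts e).getD u 0 := rfl
    have e2 : ((a-1) :: oddParts e).getD (u+1-1) 0 = (oddParts e).getD (u-1) 0 := by
      obtain ⟨v, rfl⟩ : ∃ v, u = v + 1 := ⟨u - 1, by omega⟩
      rfl
    rwa [e1, e2] at this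

lemma bundle_unblock_FF {a q : ℕ} {t : Bool} {V : ℕ} {d : List ℕ}
    (ha2 : 2 ≤ a) (hae : a % 2 = 0) (hqe : q % 2 = 0) (hd2 : ∀ y ∈ d, y + 2 ≤ a)
    (parent : Bundle false t V (List.replicate q a ++ d)) :
    Bundle false t a d := by
  set comp := List.replicate q a ++ d with hcomp
  have hmem : ∀ y ∈ d, y ∈ comp := by
    intro y hy; rw [hcomp]; exact List.mem_append_right _ hy
  have hodds : oddParts comp = oddParts d := by
    rw [hcomp, oddParts_append, oddParts_replicate_even hae, List.nil_append]
  have hlenc : comp.length = q + d.length := by simp [hcomp]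
  have hdsrt : d.Pairwise (· ≥ ·) := by
    have := parent.srt
    rw [hcomp] at this
    exact (List.pairwise_append.1 this).2.1
  constructor
  case srt => exact hdsrt
  case pos => exact fun y hy => parent.pos y (hmem y hy)
  case bnd => exact fun y hy => ⟨by have := hd2 y hy; omega, fun _ => hd2 y hy⟩
  case cnt =>
    intro j hj
    have hc := parent.cnt j hj
    rw [Nat.even_iff] at hc ⊢
    rw [hcomp, List.count_append, List.count_replicate] at hc
    simp only [beq_iff_eq] at hc
    split_ifs at hc <;> omega
  case hd => intro h; simp at h
  case odd =>
    have := parent.odd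
    rw [countP_odd_eq, hodds] at this
    rw [countP_odd_eq]
    exact this
  case len =>
    have := parent.len
    rw [hlenc] at this
    omega
  case lst =>
    intro ht hene
    have hcompne : comp ≠ [] := by
      rw [hcomp]
      intro hh
      exact hene (List.append_eq_nil_iff.1 hh).2
    have hlst := parent.lst ht hcompne
    rwa [hcomp, getD_last_append hene] at hlst
  case p3 =>
    intro u h1 h2 h3
    have := parent.p3 u h1 (by rwa [hodds]) h3
    rwa [hodds] at this
  case p4 =>
    intro u h1 h2 h3 y hy
    have := parent.p4 u h1 (by rwa [hodds]) h3 y (hmem y hy)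
    rwa [hodds] at this

set_option maxHeartbeats 1600000 in
lemma BWD : ∀ (n : ℕ) (c : List ℕ), c.length ≤ n → ∀ (V : ℕ) (b t : Bool),
    V % 2 = 0 → 2 ≤ V → Bundle b t V c →
    ∃ l : List ℕ, l.Pairwise (· ≥ ·) ∧ (∀ x ∈ l, x % 2 = 0) ∧ (∀ x ∈ l, 0 < x) ∧
      (∀ x ∈ l, x + 2 ≤ V) ∧ (t = false → (b = true ↔ Even l.length)) ∧
      ∀ p, l.headD 0 < p → (if b then xr p l else xrO l) ++ Tl b t l.length = c := by
  intro n
  induction n with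
  | zero =>
    intro c hlen V b t hV2 hV hB
    have hc : c = [] := List.length_eq_zero_iff.1 (by omega)
    subst hc
    cases b <;> cases t
    · exact absurd hB.len (by simp)
    · exact ⟨[], by simp, by simp, by simp, by simp, by simp, by
        intro p _; simp [xrO, Tl]⟩
    · exact ⟨[], by simp, by simp, by simp, by simp, by simp, by
        intro p _; simp [xr, Tl]⟩
    · exact absurd hB.len (by simp)
  | succ n ih =>
    intro c hlen V b t hV2 hV hB
    rcases eq_or_ne c [] with rfl | hcne
    · cases b <;> cases t
      · exact absurd hB.len (by simp)
      · exact ⟨[], by simp, by simp, by simp, by simp, by simp, by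
          intro p _; simp [xrO, Tl]⟩
      · exact ⟨[], by simp, by simp, by simp, by simp, by simp, by
          intro p _; simp [xr, Tl]⟩
      · exact absurd hB.len (by simp)
    obtain ⟨x, c', rfl⟩ := List.exists_cons_of_ne_nil hcne
    have hcsrt := hB.srt
    have hc'srt : c'.Pairwise (· ≥ ·) := (List.pairwise_cons.1 hcsrt).2
    have hc'le : ∀ y ∈ c', y ≤ x := (List.pairwise_cons.1 hcsrt).1
    have hxpos : 0 < x := hB.pos x (by simp)
    cases b with
    | true =>
      have hxodd : x % 2 = 1 := hB.hd rfl (by simp)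
      rcases eq_or_ne x 1 with rfl | hx1
      · -- c = [1]
        have hc'nil : c' = [] := by
          cases c' with
          | nil => rfl
          | cons z c'' =>
            exfalso
            have hz1 : z = 1 := by
              have h1 := hc'le z (by simp)
              have h2 := hB.pos z (by simp)
              omega
            subst hz1
            have hodds : oddParts (1 :: 1 :: c'') = 1 :: 1 :: oddParts c'' := by
              rw [oddParts_cons_odd (by omega), oddParts_cons_odd (by omega)]
            have := hB.p3 1 (by omega) (by rw [hodds]; simp) (by simp)
            rw [hodds] at this
            simp at this
        subst hc'nil
        have ht : t = true := by
          have := hB.len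
          rcases t with _ | _ <;> simp at this ⊢
        subst ht
        exact ⟨[], by simp, by simp, by simp, by simp, by simp, by
          intro p _; simp [xr, Tl]⟩
      · -- x = a + 1 with a ≥ 2 even
        set a := x - 1 with ha_def
        have hxa : x = a + 1 := by omega
        have hae : a % 2 = 0 := by omega
        have ha2 : 2 ≤ a := by omega
        have hap : 0 < a := by omega
        have haV : a + 2 ≤ V := by
          have := (hB.bnd x (by simp)).1
          omega
        have hc'lt : ∀ y ∈ c', y ≤ a := by
          cases c' with
          | nil => simp
          | cons z c'' =>
            have hzx : z ≠ x := by
              intro hzeq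
              subst hzeq
              have hodds : oddParts (z :: z :: c'') = z :: z :: oddParts c'' := by
                rw [oddParts_cons_odd hxodd, oddParts_cons_odd hxodd]
              have := hB.p3 1 (by omega) (by rw [hodds]; simp) (by simp)
              rw [hodds] at this
              simp at this
            intro y hy
            have h1 := hc'le y hy
            have h2 := hc'le z (by simp)
            have h3 : y ≤ z := by
              rcases List.mem_cons.1 hy with rfl | h
              · exact le_rfl
              · exact (List.pairwise_cons.1 hc'srt).1 y h
            omega
        obtain ⟨d, hc'eq, hdsrt, hdlt, hdlen⟩ := run_peel c' hc'srt a hc'lt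
        set q := c'.count a with hq_def
        have hcntd : d.count a = 0 := by
          rw [List.count_eq_zero]
          intro h
          have := hdlt a h
          omega
        have hqe : q % 2 = 0 := by
          have hc := hB.cnt a hae
          rw [Nat.even_iff] at hc
          rw [List.count_cons, hc'eq, List.count_append, List.count_replicate, hcntd] at hc
          have h1 : ¬(x = a) := by omega
          simp only [h1, if_false, beq_iff_eq, beq_self_eq_true, if_true] at hc
          simp at hc
          omega
        by_cases hhd : d.headD 0 = a - 1 ∧ d ≠ []
        · -- block with a trailing a-1 : next phase true
          obtain ⟨e, hdsh⟩ : ∃ e, d = (a-1) :: e := by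
            cases d with
            | nil => exact absurd rfl hhd.2
            | cons w e => exact ⟨e, by rw [← hhd.1]; rfl⟩
          have he : ∀ y ∈ e, y < a := by
            intro y hy; exact hdlt y (by rw [hdsh]; simp [hy])
          have parent' : Bundle true t V ((a+1) :: (List.replicate q a ++ ((a-1) :: e))) := by
            rw [hxa, hc'eq, hdsh] at hB
            exact hB
          have hsub := bundle_unblock_TT ha2 hae hqe he parent'
          have helen : e.length ≤ n := by
            have : c'.length = q + d.length := by omega
            have : d.length = e.length + 1 := by rw [hdsh]; simp
            simp at hlen
            omega
          obtain ⟨l', hl's, hl'e, hl'p, hl'b, hl'par, hl'eq⟩ :=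
            ih e helen a true t hae ha2 hsub
          obtain ⟨w, hw⟩ : ∃ w, q = 2*w := ⟨q / 2, by omega⟩
          have hl'hd : l'.headD 0 < a := by
            cases l' with
            | nil => simpa using hap
            | cons z zs => have := hl'b z (by simp); simpa using (by omega : z < a)
          have he2 : xr a l' ++ Tl true t l'.length = e := by
            simpa using hl'eq a hl'hd
          refine ⟨List.replicate (q+2) a ++ l', ?_, ?_, ?_, ?_, ?_, ?_⟩
          · exact sorted_rep_append hl's (fun y hy => by have := hl'b y hy; omega)
          · intro y hy
            rcases List.mem_append.1 hy with h | h
            · rw [List.eq_of_mem_replicate h]; exact hae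
            · exact hl'e y h
          · intro y hy
            rcases List.mem_append.1 hy with h | h
            · rw [List.eq_of_mem_replicate h]; omega
            · exact hl'p y h
          · intro y hy
            rcases List.mem_append.1 hy with h | h
            · rw [List.eq_of_mem_replicate h]; omega
            · have := hl'b y h; omega
          · intro ht
            have := hl'par ht
            simp only [List.length_append, List.length_replicate] at *
            rw [Nat.even_iff] at *
            simp at this ⊢
            omega
          · intro p hp
            have hap' : a < p := by
              rw [headD_rep_append (q+1) a l'] at hp
              exact hp
            rw [if_pos rfl]
            have htl : Tl true t (List.replicate (q+2) a ++ l').length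
                = Tl true t l'.length := Tl_shift t (by simp; omega)
            rw [htl]
            have hq2 : q + 2 = 2*w + 2 := by omega
            rw [hq2, xr_peel_even w p a l' hap hl'hd, if_pos hap']
            rw [hxa, hc'eq, hdsh, ← he2, hw]
            simp
        · -- no trailing a-1 : next phase false
          have hd2 : ∀ y ∈ d, y + 2 ≤ a := by
            cases d with
            | nil => simp
            | cons w e =>
              have hwne : w ≠ a - 1 := by
                intro hwa
                exact hhd ⟨by simp [hwa], by simp⟩
              have hwlt : w < a := hdlt w (by simp)
              intro y hy
              have hyw : y ≤ w := by
                rcases List.mem_cons.1 hy with rfl | h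
                · exact le_rfl
                · exact (List.pairwise_cons.1 hdsrt).1 y h
              omega
          have parent' : Bundle true t V ((a+1) :: (List.replicate q a ++ d)) := by
            rw [hxa, hc'eq] at hB
            exact hB
          have hsub := bundle_unblock_TF ha2 hae hqe hd2 parent'
          have hdlen2 : d.length ≤ n := by
            simp at hlen
            omega
          obtain ⟨l', hl's, hl'e, hl'p, hl'b, hl'par, hl'eq⟩ :=
            ih d hdlen2 a false t hae ha2 hsub
          obtain ⟨w, hw⟩ : ∃ w, q = 2*w := ⟨q / 2, by omega⟩
          have hl'hd : l'.headD 0 < a := by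
            cases l' with
            | nil => simpa using hap
            | cons z zs => have := hl'b z (by simp); simpa using (by omega : z < a)
          have he2 : xrO l' ++ Tl false t l'.length = d := by
            simpa using hl'eq (l'.headD 0 + 1) (by omega)
          refine ⟨List.replicate (q+1) a ++ l', ?_, ?_, ?_, ?_, ?_, ?_⟩
          · exact sorted_rep_append hl's (fun y hy => by have := hl'b y hy; omega)
          · intro y hy
            rcases List.mem_append.1 hy with h | h
            · rw [List.eq_of_mem_replicate h]; exact hae
            · exact hl'e y h
          · intro y hy
            rcases List.mem_append.1 hy with h | h
            · rw [List.eq_of_mem_replicate h]; omega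
            · exact hl'p y h
          · intro y hy
            rcases List.mem_append.1 hy with h | h
            · rw [List.eq_of_mem_replicate h]; omega
            · have := hl'b y h; omega
          · intro ht
            have := hl'par ht
            simp only [List.length_append, List.length_replicate] at *
            rw [Nat.even_iff] at *
            simp at this ⊢
            omega
          · intro p hp
            have hap' : a < p := by
              rw [headD_rep_append q a l'] at hp
              exact hp
            rw [if_pos rfl]
            have htl : Tl true t (List.replicate (q+1) a ++ l').length
                = Tl false t l'.length := Tl_shift t (by simp; omega)
            rw [htl]
            have hq2 : q + 1 = 2*w + 1 := by omega
            rw [hq2, xr_peel_odd w p a l' hap hl'hd, if_pos hap']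
            rw [hxa, hc'eq, ← he2, hw]
            simp
    | false =>
      rcases Nat.mod_two_eq_zero_or_one x with hxe | hxodd
      · -- x even : leading run of x
        set a := x with ha_def
        have hae : a % 2 = 0 := hxe
        have hap : 0 < a := hxpos
        have ha2 : 2 ≤ a := by omega
        have haV : a + 2 ≤ V := (hB.bnd x (by simp [ha_def])).2 rfl
        have hale : ∀ y ∈ x :: c', y ≤ a := by
          intro y hy
          rcases List.mem_cons.1 hy with rfl | h
          · exact le_rfl
          · exact hc'le y h
        obtain ⟨d, hceq, hdsrt, hdlt, hdlen⟩ := run_peel (x :: c') hcsrt a hale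
        set q := (x :: c').count a with hq_def
        have hq1 : 1 ≤ q := List.count_pos_iff.2 (by simp [ha_def])
        have hcntd : d.count a = 0 := by
          rw [List.count_eq_zero]
          intro h
          have := hdlt a h
          omega
        have hqe : q % 2 = 0 := by
          have hc := hB.cnt a hae
          rw [Nat.even_iff] at hc
          rw [hceq, List.count_append, List.count_replicate, hcntd] at hc
          simp at hc
          omega
        by_cases hhd : d.headD 0 = a - 1 ∧ d ≠ []
        · obtain ⟨e, hdsh⟩ : ∃ e, d = (a-1) :: e := by
            cases d with
            | nil => exact absurd rfl hhd.2
            | cons w e => exact ⟨e, by rw [← hhd.1]; rfl⟩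
          have he : ∀ y ∈ e, y < a := by
            intro y hy; exact hdlt y (by rw [hdsh]; simp [hy])
          have parent' : Bundle false t V (List.replicate q a ++ ((a-1) :: e)) := by
            rw [hceq, hdsh] at hB
            exact hB
          have hsub := bundle_unblock_FT ha2 hae hqe he parent'
          have helen : e.length ≤ n := by
            have h1 : (x :: c').length = q + d.length := by omega
            have h2 : d.length = e.length + 1 := by rw [hdsh]; simp
            simp at hlen h1
            omega
          obtain ⟨l', hl's, hl'e, hl'p, hl'b, hl'par, hl'eq⟩ :=
            ih e helen a true t hae ha2 hsub
          obtain ⟨w, hw⟩ : ∃ w, q = 2*w := ⟨q / 2, by omega⟩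
          have hl'hd : l'.headD 0 < a := by
            cases l' with
            | nil => simpa using hap
            | cons z zs => have := hl'b z (by simp); simpa using (by omega : z < a)
          have he2 : xr a l' ++ Tl true t l'.length = e := by
            simpa using hl'eq a hl'hd
          refine ⟨List.replicate (q+1) a ++ l', ?_, ?_, ?_, ?_, ?_, ?_⟩
          · exact sorted_rep_append hl's (fun y hy => by have := hl'b y hy; omega)
          · intro y hy
            rcases List.mem_append.1 hy with h | h
            · rw [List.eq_of_mem_replicate h]; exact hae
            · exact hl'e y h
          · intro y hy
            rcases List.mem_append.1 hy with h | h
            · rw [List.eq_of_mem_replicate h]; omega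
            · exact hl'p y h
          · intro y hy
            rcases List.mem_append.1 hy with h | h
            · rw [List.eq_of_mem_replicate h]; omega
            · have := hl'b y h; omega
          · intro ht
            have := hl'par ht
            simp only [List.length_append, List.length_replicate] at *
            rw [Nat.even_iff] at *
            simp at this ⊢
            omega
          · intro p hp
            rw [if_neg (by simp)]
            have htl : Tl false t (List.replicate (q+1) a ++ l').length
                = Tl true t l'.length := Tl_shift t (by simp; omega)
            rw [htl]
            have hq2 : q + 1 = 2*w + 1 := by omega
            rw [hq2, xrO_peel_odd w a l' hap hl'hd]
            rw [hceq, hdsh, ← he2, hw]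
            simp
        · have hd2 : ∀ y ∈ d, y + 2 ≤ a := by
            cases d with
            | nil => simp
            | cons w e =>
              have hwne : w ≠ a - 1 := by
                intro hwa
                exact hhd ⟨by simp [hwa], by simp⟩
              have hwlt : w < a := hdlt w (by simp)
              intro y hy
              have hyw : y ≤ w := by
                rcases List.mem_cons.1 hy with rfl | h
                · exact le_rfl
                · exact (List.pairwise_cons.1 hdsrt).1 y h
              omega
          have parent' : Bundle false t V (List.replicate q a ++ d) := by
            rw [hceq] at hB
            exact hB
          have hsub := bundle_unblock_FF ha2 hae hqe hd2 parent'
          have hdlen2 : d.length ≤ n := by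
            have h1 : (x :: c').length = q + d.length := by omega
            simp at hlen h1
            omega
          obtain ⟨l', hl's, hl'e, hl'p, hl'b, hl'par, hl'eq⟩ :=
            ih d hdlen2 a false t hae ha2 hsub
          obtain ⟨w, hw⟩ : ∃ w, q = 2*w + 2 := ⟨(q - 2) / 2, by omega⟩
          have hl'hd : l'.headD 0 < a := by
            cases l' with
            | nil => simpa using hap
            | cons z zs => have := hl'b z (by simp); simpa using (by omega : z < a)
          have he2 : xrO l' ++ Tl false t l'.length = d := by
            simpa using hl'eq (l'.headD 0 + 1) (by omega)
          refine ⟨List.replicate q a ++ l', ?_, ?_, ?_, ?_, ?_, ?_⟩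
          · exact sorted_rep_append hl's (fun y hy => by have := hl'b y hy; omega)
          · intro y hy
            rcases List.mem_append.1 hy with h | h
            · rw [List.eq_of_mem_replicate h]; exact hae
            · exact hl'e y h
          · intro y hy
            rcases List.mem_append.1 hy with h | h
            · rw [List.eq_of_mem_replicate h]; omega
            · exact hl'p y h
          · intro y hy
            rcases List.mem_append.1 hy with h | h
            · rw [List.eq_of_mem_replicate h]; omega
            · have := hl'b y h; omega
          · intro ht
            have := hl'par ht
            simp only [List.length_append, List.length_replicate] at *
            rw [Nat.even_iff] at *
            simp at this ⊢
            omega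
          · intro p hp
            rw [if_neg (by simp)]
            have htl : Tl false t (List.replicate q a ++ l').length
                = Tl false t l'.length := Tl_shift t (by simp; omega)
            rw [htl]
            rw [hw, xrO_peel_even w a l' hap hl'hd]
            rw [hceq, ← he2, hw]
            simp
      · -- x odd at even phase : singleton block x = a - 1
        set a := x + 1 with ha_def
        have hae : a % 2 = 0 := by omega
        have hap : 0 < a := by omega
        have ha2 : 2 ≤ a := by omega
        have haV : a + 2 ≤ V := by
          have := (hB.bnd x (by simp)).2 rfl
          omega
        have he : ∀ y ∈ c', y < a := by
          intro y hy
          have := hc'le y hy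
          omega
        have parent' : Bundle false t V (List.replicate 0 a ++ ((a-1) :: c')) := by
          have hxa : a - 1 = x := by omega
          rw [List.replicate_zero, List.nil_append, hxa]
          exact hB
        have hsub := bundle_unblock_FT ha2 hae (by omega) he parent'
        have hc'len : c'.length ≤ n := by simp at hlen; omega
        obtain ⟨l', hl's, hl'e, hl'p, hl'b, hl'par, hl'eq⟩ :=
          ih c' hc'len a true t hae ha2 hsub
        have hl'hd : l'.headD 0 < a := by
          cases l' with
          | nil => simpa using hap
          | cons z zs => have := hl'b z (by simp); simpa using (by omega : z < a)
        have he2 : xr a l' ++ Tl true t l'.length = c' := by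
          simpa using hl'eq a hl'hd
        refine ⟨a :: l', ?_, ?_, ?_, ?_, ?_, ?_⟩
        · exact List.pairwise_cons.2 ⟨fun y hy => by have := hl'b y hy; omega, hl's⟩
        · intro y hy
          rcases List.mem_cons.1 hy with rfl | h
          · exact hae
          · exact hl'e y h
        · intro y hy
          rcases List.mem_cons.1 hy with rfl | h
          · omega
          · exact hl'p y h
        · intro y hy
          rcases List.mem_cons.1 hy with rfl | h
          · omega
          · have := hl'b y h; omega
        · intro ht
          have := hl'par ht
          simp only [List.length_cons] at *
          rw [Nat.even_iff] at *
          simp at this ⊢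
          omega
        · intro p hp
          rw [if_neg (by simp)]
          have htl : Tl false t (a :: l').length = Tl true t l'.length :=
            Tl_shift t (by simp; omega)
          rw [htl]
          have hshape : a :: l' = List.replicate (2*0+1) a ++ l' := by simp
          rw [hshape, xrO_peel_odd 0 a l' hap hl'hd]
          have hxa : a - 1 = x := by omega
          rw [hxa, ← he2]
          simp

lemma sum_mod_two (c : List ℕ) : c.sum % 2 = c.countP (fun x => x % 2 = 1) % 2 := by
  induction c with
  | nil => rfl
  | cons x s ih =>
    by_cases hx : x % 2 = 1 <;> simp [List.countP_cons, hx, List.sum_cons] <;> omega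

lemma even_countP_even : ∀ (n : ℕ) (c : List ℕ), c.length ≤ n →
    (∀ j, j % 2 = 0 → Even (c.count j)) →
    Even (c.countP (fun x => x % 2 = 0)) := by
  intro n
  induction n with
  | zero =>
    intro c hlen _
    have : c = [] := List.length_eq_zero_iff.1 (by omega)
    subst this
    simp
  | succ n ih =>
    intro c hlen hcnt
    by_cases hx : ∃ x ∈ c, x % 2 = 0
    · obtain ⟨x, hxm, hxe⟩ := hx
      have hc2 : 2 ≤ c.count x := by
        have h1 := hcnt x hxe
        have h2 : 0 < c.count x := List.count_pos_iff.2 hxm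
        rcases h1 with ⟨w, hw⟩
        omega
      have hperm1 := List.perm_cons_erase hxm
      have hxm2 : x ∈ c.erase x := by
        have := List.count_erase_self (a := x) (l := c)
        have h2 : 0 < (c.erase x).count x := by omega
        exact List.count_pos_iff.1 h2
      have hperm2 := List.perm_cons_erase hxm2
      set c' := (c.erase x).erase x with hc'
      have hcountc : ∀ j, c.count j = (if j = x then 2 else 0) + c'.count j := by
        intro j
        have e1 := hperm1.count_eq j
        have e2 := hperm2.count_eq j
        rw [e1, List.count_cons, e2, List.count_cons]
        simp only [beq_iff_eq]
        split_ifs <;> omega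
      have hcnt' : ∀ j, j % 2 = 0 → Even (c'.count j) := by
        intro j hj
        have := hcnt j hj
        rw [hcountc j] at this
        split_ifs at this with h
        · rcases this with ⟨w, hw⟩; exact ⟨w - 1, by omega⟩
        · simpa using this
      have hlen' : c'.length ≤ n := by
        have e1 := hperm1.length_eq
        have e2 := hperm2.length_eq
        simp [List.length_cons] at e1 e2
        omega
      have hcp : c.countP (fun x => x % 2 = 0)
          = 2 + c'.countP (fun x => x % 2 = 0) := by
        have e1 := hperm1.countP_eq (fun x => decide (x % 2 = 0))
        have e2 := hperm2.countP_eq (fun x => decide (x % 2 = 0))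
        rw [e1, List.countP_cons, e2, List.countP_cons]
        simp [hxe]
        omega
      rw [hcp]
      have := ih c' hlen' hcnt'
      rcases this with ⟨w, hw⟩
      exact ⟨w + 1, by omega⟩
    · push_neg at hx
      have : c.countP (fun x => x % 2 = 0) = 0 := by
        rw [List.countP_eq_zero]
        intro a ha
        simp only [decide_eq_true_eq]
        exact hx a ha
      simp [this]

lemma length_split_parity (c : List ℕ) :
    c.length = c.countP (fun x => x % 2 = 1) + c.countP (fun x => x % 2 = 0) := by
  induction c with
  | nil => rfl
  | cons x s ih =>
    rcases Nat.mod_two_eq_zero_or_one x with hx | hx <;>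
      simp [List.countP_cons, hx, List.length_cons] <;> omega

lemma xi_eq_xrT {l : List ℕ} (hsrt : l.Pairwise (· ≥ ·)) (hpos : ∀ x ∈ l, 0 < x)
    {κ : ℕ} (hκ : κ = 0 ∨ κ = 1) (hlenk : κ = 0 → Even l.length) :
    xi κ l = xr (l.headD 0 + 1) l ++ Tl true (decide (κ = 1)) l.length := by
  rw [xi_eq_xr hsrt hpos]
  congr 1
  unfold Tl
  rcases hκ with rfl | rfl
  · have := hlenk rfl
    rw [Nat.even_iff] at this
    rw [if_neg (by omega), if_neg (by simp)]
  · refine if_congr ?_ rfl rfl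
    simp only [decide_true, if_true]
    constructor
    · intro h; exact ⟨by simp, by omega⟩
    · rintro ⟨-, h⟩; omega

lemma xi_sum {l : List ℕ} (hsrt : l.Pairwise (· ≥ ·)) (hpos : ∀ x ∈ l, 0 < x)
    {κ : ℕ} (hκ : κ = 0 ∨ κ = 1) (hlenk : κ = 0 → Even l.length) :
    (xi κ l).sum = l.sum + κ := by
  rw [xi_eq_xr hsrt hpos, List.sum_append]
  have hsx := sum_xr (l.headD 0 + 1) l hpos
  rcases eq_or_ne l [] with rfl | hne
  · rcases hκ with rfl | rfl <;> simp [xr]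
  · have hhd : l.headD 0 < l.headD 0 + 1 := by omega
    have hite : (if (l.length + κ) % 2 = 1 then [1] else ([]:List ℕ)).sum
        = if (l.length + κ) % 2 = 1 then 1 else 0 := by split_ifs <;> simp
    rw [hite]
    rcases hκ with rfl | rfl
    · have hev := hlenk rfl
      rw [Nat.even_iff] at hev
      rw [if_pos ⟨hne, hev⟩, if_pos ⟨hne, hhd⟩] at hsx
      rw [if_neg (by omega)]
      omega
    · rcases Nat.even_or_odd l.length with h | h
      · rw [Nat.even_iff] at h
        rw [if_pos ⟨hne, h⟩, if_pos ⟨hne, hhd⟩] at hsx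
        rw [if_pos (by omega)]
        omega
      · rw [Nat.odd_iff] at h
        rw [if_neg (by rintro ⟨-, hh⟩; omega), if_pos ⟨hne, hhd⟩] at hsx
        rw [if_neg (by omega)]
        omega

lemma kappa_t_false {κ : ℕ} (hκ : κ = 0 ∨ κ = 1) (htf : decide (κ = 1) = false) :
    κ = 0 := by
  rcases hκ with rfl | rfl
  · rfl
  · simp at htf

end Stmt3

/-- for every even `N` and `κ ∈ {0,1}`, the map `Ξ` restricts to a
bijection from `𝒮^κ_N` onto `ℛ_{N+κ}` (in particular it maps `𝒮^κ_N` into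
`ℛ_{N+κ}`, whose elements are nonincreasing lists of positive integers of sum `N+κ`). -/
theorem stmt3 (N κ : ℕ) (hN : Even N) (hκ : κ = 0 ∨ κ = 1) :
    Set.BijOn (xi κ) (SKN κ N) (RN (N + κ)) := by
  classical
  refine ⟨?_, ?_, ?_⟩
  · -- MapsTo
    rintro l hl
    obtain ⟨⟨hpart, hev, hlenk⟩, hsum⟩ := hl
    obtain ⟨hsrt, hpos⟩ := hpart
    set t := decide (κ = 1) with ht_def
    have hxieq := Stmt3.xi_eq_xrT hsrt hpos hκ hlenk
    have hbund := Stmt3.FWD l.length l le_rfl hsrt hev hpos (l.headD 0 + 2) true t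
      (l.headD 0 + 1)
      (fun x hx => by have := Stmt3.sorted_le_head hsrt x hx; omega) (by omega)
      (fun _ => by omega)
      (by intro htf
          have hk0 : κ = 0 := Stmt3.kappa_t_false hκ htf
          exact iff_of_true rfl (hlenk hk0))
    rw [hxieq]
    refine ⟨⟨⟨⟨hbund.srt, hbund.pos⟩, hbund.cnt⟩, ?_, ?_, ?_, ?_⟩, ?_⟩
    · exact fun hne => hbund.hd rfl hne
    · intro hne hevlen
      rcases hκ with rfl | rfl
      · exact hbund.lst (by simp [ht_def]) hne
      · exfalso
        have hL := hbund.len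
        have ht1 : t = true := by simp [ht_def]
        have hd1 : (decide ((1:ℕ) = 1)) = true := by simp
        rw [Nat.even_iff] at hevlen
        rw [hd1] at hevlen
        rw [ht1] at hL
        simp only [List.length_append, Stmt3.length_xr] at hevlen
        simp at hL
        omega
    · intro u h1 h2 h3
      exact hbund.p3 u h1 h2 (by simpa using h3)
    · intro u h1 h2 h3 k hk
      have hy : (Stmt3.xr (l.headD 0 + 1) l ++ Stmt3.Tl true t l.length).getD k 0
          ∈ (Stmt3.xr (l.headD 0 + 1) l ++ Stmt3.Tl true t l.length) := by
        rw [List.getD_eq_getElem _ _ hk]; exact List.getElem_mem hk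
      exact hbund.p4 u h1 h2 (by simpa using h3) _ hy
    · rw [← hxieq, Stmt3.xi_sum hsrt hpos hκ hlenk]
      omega
  · -- InjOn
    rintro l1 hl1 l2 hl2 heq
    obtain ⟨⟨hpart1, he1, hk1⟩, -⟩ := hl1
    obtain ⟨⟨hpart2, he2, hk2⟩, -⟩ := hl2
    obtain ⟨hs1, hp1⟩ := hpart1
    obtain ⟨hs2, hp2⟩ := hpart2
    have e1 : Stmt3.yr (xi κ l1) = l1 := by
      rw [Stmt3.xi_eq_xrT hs1 hp1 hκ hk1]
      exact Stmt3.yr_xr _ l1 he1 hp1 _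
    have e2 : Stmt3.yr (xi κ l2) = l2 := by
      rw [Stmt3.xi_eq_xrT hs2 hp2 hκ hk2]
      exact Stmt3.yr_xr _ l2 he2 hp2 _
    rw [← e1, ← e2, heq]
  · -- SurjOn
    rintro c hc
    obtain ⟨⟨hQ, h1, h2, h3, h4⟩, hsum⟩ := hc
    obtain ⟨hpart, hq⟩ := hQ
    obtain ⟨hsrt, hpos⟩ := hpart
    rcases eq_or_ne c [] with rfl | hcne
    · have hsum0 : N = 0 ∧ κ = 0 := by
        simp at hsum
        omega
      obtain ⟨rfl, rfl⟩ := hsum0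
      refine ⟨[], ⟨⟨⟨by simp, by simp⟩, by simp, by simp⟩, by simp⟩, ?_⟩
      simp [xi]
    · set t := decide (κ = 1) with ht_def
      have hhead : c.getD 0 0 % 2 = 1 := h1 hcne
      have hhd2 : c.headD 0 % 2 = 1 := by
        cases c with
        | nil => exact absurd rfl hcne
        | cons z w => simpa using hhead
      set V := c.headD 0 + 1 with hV_def
      have hV2 : V % 2 = 0 := by omega
      have hVpos : 0 < c.headD 0 := by
        cases c with
        | nil => exact absurd rfl hcne
        | cons z w => simpa using hpos z (by simp)
      have hV : 2 ≤ V := by omega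
      have hodd : c.countP (fun x => x % 2 = 1) % 2 = (if t = true then 1 else 0) := by
        have hs := Stmt3.sum_mod_two c
        rw [hsum] at hs
        rcases hN with ⟨w, hw⟩
        rcases hκ with rfl | rfl <;> simp [ht_def] <;> omega
      have hevencnt := Stmt3.even_countP_even c.length c le_rfl hq
      rw [Nat.even_iff] at hevencnt
      have hlensplit := Stmt3.length_split_parity c
      have hlenp : c.length % 2 = (if t = true then 1 else 0) := by
        rw [← hodd]
        omega
      have hbund : Stmt3.Bundle true t V c := by
        constructor
        case srt => exact hsrt
        case pos => exact hpos
        case bnd =>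
          intro x hx
          exact ⟨by have := Stmt3.sorted_le_head hsrt x hx; omega, by simp⟩
        case cnt => exact hq
        case hd => intro _ hne; exact h1 hne
        case odd => simpa using hodd
        case len => simpa using hlenp
        case lst =>
          intro htf hne
          apply h2 hne
          rw [Nat.even_iff]
          rw [htf] at hlenp
          simpa using hlenp
        case p3 =>
          intro u hu1 hu2 hu3
          exact h3 u hu1 hu2 (by simpa using hu3)
        case p4 =>
          intro u hu1 hu2 hu3 y hy
          obtain ⟨k, hk, rfl⟩ := List.mem_iff_getElem.1 hy
          have hres := h4 u hu1 hu2 (by simpa using hu3) k hk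
          rwa [List.getD_eq_getElem c 0 hk] at hres
      obtain ⟨l, hls, hle, hlp, hlb, hlpar, hleq⟩ :=
        Stmt3.BWD c.length c le_rfl V true t hV2 hV hbund
      have hlenk : κ = 0 → Even l.length := by
        intro hk0
        have hht : t = false := by rw [ht_def, hk0]; simp
        exact (hlpar hht).1 rfl
      have hxieq := Stmt3.xi_eq_xrT hls hlp hκ hlenk
      have hxc : xi κ l = c := by
        rw [hxieq]
        exact hleq (l.headD 0 + 1) (by omega)
      refine ⟨l, ⟨⟨⟨hls, hlp⟩, hle, hlenk⟩, ?_⟩, hxc⟩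
      have hxs := Stmt3.xi_sum hls hlp hκ hlenk
      rw [hxc, hsum] at hxs
      omega
end

section
/- Let N be an even natural number and κ ∈ {0,1}. For r_* = (r_1 ≥ … ≥ r_τ) ∈ ℛ_{N+κ} define ζ : [1, τ] → {−1, 0, 1} by ζ(k) = (−1)^k if r_k is odd and ζ(k) = 0 if r_k is even. Then r_k + ζ(k) is an even nonnegative integer for every k, and r_k + ζ(k) ≥ r_{k+1} + ζ(k+1) for every k ∈ [1, τ−1]. Moreover, the map sending r_* to (r_1+ζ(1) ≥ r_2+ζ(2) ≥ … ≥ r_τ+ζ(τ)) when r_τ > κ (or τ = 0), and to (r_1+ζ(1) ≥ r_2+ζ(2) ≥ … ≥ r_{τ−1}+ζ(τ−1)) when r_τ = κ, takes values in 𝒮^κ_N and is a two-sided inverse of the restriction of Ξ to 𝒮^κ_N. -/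
/-- The `k`-th entry (0-indexed; `k` corresponds to the 1-based index `k+1`) of the
inverse map: `r_k + ζ(k)` where `ζ(k) = (-1)^k` (1-based) if `r_k` is odd and
`ζ(k) = 0` if `r_k` is even. -/
def zetaEntry (l : List ℕ) (k : ℕ) : ℕ :=
  if l.getD k 0 % 2 = 1 then
    (if (k + 1) % 2 = 1 then l.getD k 0 - 1 else l.getD k 0 + 1)
  else l.getD k 0

/-- The inverse map `ℛ_{N+κ} → 𝒮^κ_N`: take `(r_k + ζ(k))_k`, dropping the last entry
when `r_τ = κ` (and keeping all entries when `τ = 0` or `r_τ > κ`). -/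
def xiInv (κ : ℕ) (l : List ℕ) : List ℕ :=
  if l ≠ [] ∧ l.getD (l.length - 1) 0 = κ then
    ((List.range l.length).map (zetaEntry l)).dropLast
  else (List.range l.length).map (zetaEntry l)



namespace Stmt4Aux

lemma getD0 {l : List ℕ} {k : ℕ} (h : k < l.length) : l.getD k 0 = l[k] :=
  List.getD_eq_getElem l 0 h

lemma sorted_getD {l : List ℕ} (hs : l.Pairwise (· ≥ ·)) {x y : ℕ} (hxy : x ≤ y)
    (hy : y < l.length) : l.getD y 0 ≤ l.getD x 0 := by
  rcases eq_or_lt_of_le hxy with rfl | h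
  · exact le_refl _
  · rw [getD0 hy, getD0 (lt_trans h hy)]
    exact hs.rel_get_of_lt (a := ⟨x, lt_trans h hy⟩) (b := ⟨y, hy⟩) h

lemma countP_char {p : ℕ → Bool} (hp : ∀ a b : ℕ, b ≤ a → p b = true → p a = true) :
    ∀ {l : List ℕ}, l.Pairwise (· ≥ ·) → ∀ k, (hk : k < l.length) →
      (p l[k] = true ↔ k < l.countP p) := by
  intro l
  induction l with
  | nil => intro _ k hk; simp at hk
  | cons a t ih =>
    intro hs k hk
    have hst : t.Pairwise (· ≥ ·) := hs.of_cons
    have hat : ∀ x ∈ t, a ≥ x := fun x hx => List.rel_of_pairwise_cons hs hx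
    rw [List.countP_cons]
    by_cases hpa : p a = true
    · cases k with
      | zero => simpa [hpa]
      | succ k =>
        have hk' : k < t.length := by simpa using hk
        have h2 := ih hst k hk'
        simp only [List.getElem_cons_succ, hpa, if_true]
        rw [h2]
        omega
    · have ht0 : t.countP p = 0 := by
        rw [List.countP_eq_zero]
        intro x hx
        intro hpx
        exact hpa (hp a x (hat x hx) hpx)
      cases k with
      | zero => simp [hpa, ht0]
      | succ k =>
        have hk' : k < t.length := by simpa using hk
        have hfalse : ¬ p t[k] = true := fun hpx =>
          hpa (hp a t[k] (hat _ (t.getElem_mem hk')) hpx)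
        simp [hpa, ht0, hfalse]

lemma countP_le_split (j : ℕ) (l : List ℕ) :
    l.countP (fun x => decide (j ≤ x)) = l.countP (fun x => decide (j < x)) + l.count j := by
  induction l with
  | nil => simp
  | cons a t ih =>
    rw [List.countP_cons, List.countP_cons, List.count_cons, ih]
    rcases lt_trichotomy j a with h | h | h
    · simp [Nat.le_of_lt h, h, Nat.ne_of_lt' h]
      omega
    · subst h; simp; omega
    · simp [Nat.not_le.mpr h, Nat.not_lt.mpr (le_of_lt h), Nat.ne_of_lt h]

lemma even_countP {p : ℕ → Bool} {l : List ℕ} (h : ∀ x ∈ l, p x = true → Even (l.count x)) :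
    Even (l.countP p) := by
  rw [List.countP_eq_length_filter, ← List.sum_toFinset_count_eq_length]
  apply Finset.even_sum
  intro x hx
  rw [List.mem_toFinset, List.mem_filter] at hx
  rw [List.count_filter hx.2]
  exact h x hx.1 hx.2

lemma sum_mod_two (l : List ℕ) :
    l.sum % 2 = l.countP (fun x => decide (x % 2 = 1)) % 2 := by
  induction l with
  | nil => rfl
  | cons a t ih =>
    rw [List.sum_cons, List.countP_cons]
    by_cases h : a % 2 = 1 <;> simp [h] <;> omega

lemma countP_and_split (p q : ℕ → Bool) (l : List ℕ) :
    l.countP p = l.countP (fun x => p x && q x) + l.countP (fun x => p x && !q x) := by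
  induction l with
  | nil => simp
  | cons a t ih =>
    rw [List.countP_cons, List.countP_cons, List.countP_cons, ih]
    by_cases hp : p a = true <;> by_cases hq : q a = true <;> simp [hp, hq] <;> omega

lemma length_countP (p : ℕ → Bool) (l : List ℕ) :
    l.length = l.countP p + l.countP (fun x => !p x) := by
  induction l with
  | nil => simp
  | cons a t ih =>
    rw [List.length_cons, List.countP_cons, List.countP_cons, ih]
    by_cases hp : p a = true <;> simp [hp] <;> omega


end Stmt4Aux
namespace Stmt4Aux

/-- odd predicate as Bool -/
abbrev oddp : ℕ → Bool := fun x => decide (x % 2 = 1)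

lemma oddParts_getD {l : List ℕ} {k : ℕ} (hk : k < l.length)
    (ho : l.getD k 0 % 2 = 1) :
    (l.take k).countP oddp < (oddParts l).length ∧
      (oddParts l).getD ((l.take k).countP oddp) 0 = l.getD k 0 := by
  have hsplit : l = l.take k ++ l.drop k := (List.take_append_drop k l).symm
  have hdrop : l.drop k = l[k] :: l.drop (k + 1) := List.drop_eq_getElem_cons hk
  have hfilter : oddParts l = (l.take k).filter oddp ++ (l[k] :: ((l.drop (k+1)).filter oddp)) := by
    rw [oddParts]
    conv_lhs => rw [hsplit]
    rw [List.filter_append, hdrop, List.filter_cons]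
    rw [getD0 hk] at ho
    simp [ho]
  have hlen : ((l.take k).filter oddp).length = (l.take k).countP oddp :=
    List.countP_eq_length_filter.symm
  constructor
  · rw [hfilter, List.length_append, ← hlen]
    simp
  · rw [hfilter, ← hlen, getD0, List.getElem_append_right (le_refl _), getD0 hk]
    · simp
    · rw [List.length_append]
      simp

section RsetLemmas

variable {l : List ℕ} (hR : l ∈ Rset)

lemma Rsorted (hR : l ∈ Rset) : l.Pairwise (· ≥ ·) := hR.1.1.1

lemma Rpos (hR : l ∈ Rset) {k : ℕ} (hk : k < l.length) : 0 < l.getD k 0 := by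
  rw [getD0 hk]; exact hR.1.1.2 _ (l.getElem_mem hk)

lemma Rcount (hR : l ∈ Rset) {j : ℕ} (hj : j % 2 = 0) : Even (l.count j) := hR.1.2 j hj

/-- even entries above any threshold: even count -/
lemma Reven_gt (hR : l ∈ Rset) (j : ℕ) :
    Even (l.countP (fun x => decide (j < x) && !oddp x)) := by
  apply even_countP
  intro x _ hx
  simp only [Bool.and_eq_true, Bool.not_eq_true', decide_eq_false_iff_not] at hx
  exact Rcount hR (by omega : x % 2 = 0)

/-- (A): position parity equals odd-count parity at odd entries -/
lemma posParity (hR : l ∈ Rset) {k : ℕ} (hk : k < l.length)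
    (ho : l.getD k 0 % 2 = 1) :
    k % 2 = ((l.take k).countP oddp) % 2 := by
  set j := l.getD k 0 with hj
  have hq : ∀ x ∈ l.take k, j ≤ x := by
    intro x hx
    obtain ⟨i, hi, rfl⟩ := List.mem_iff_getElem.1 hx
    rw [List.getElem_take]
    have hik : i < k := by have := hi; simpa using lt_of_lt_of_le this (by simp)
    rw [← getD0 (lt_trans hik hk)]
    exact sorted_getD (Rsorted hR) (le_of_lt hik) hk
  have hlen : (l.take k).length = k := by
    rw [List.length_take]; omega
  -- even entries in take k are exactly the even entries of l that are > j
  have he1 : (l.take k).countP (fun x => !oddp x) =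
      (l.take k).countP (fun x => decide (j < x) && !oddp x) := by
    apply List.countP_congr
    intro x hx
    simp only [Bool.and_eq_true, Bool.not_eq_true', decide_eq_false_iff_not, decide_eq_true_eq]
    constructor
    · intro hxe
      refine ⟨?_, hxe⟩
      have := hq x hx
      omega
    · exact fun h => h.2
  have he2 : (l.drop k).countP (fun x => decide (j < x) && !oddp x) = 0 := by
    rw [List.countP_eq_zero]
    intro x hx
    obtain ⟨i, hi, rfl⟩ := List.mem_iff_getElem.1 hx
    have hi' : k + i < l.length := by rw [List.length_drop] at hi; omega
    rw [List.getElem_drop]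
    simp only [Bool.and_eq_true, decide_eq_true_eq, not_and]
    intro hlt
    exfalso
    have hki : k ≤ k + i := Nat.le_add_right _ _
    have h2 : l.getD (k+i) 0 ≤ j := sorted_getD (Rsorted hR) hki hi'
    rw [getD0 hi'] at h2
    omega
  have he3 : l.countP (fun x => decide (j < x) && !oddp x) =
      (l.take k).countP (fun x => decide (j < x) && !oddp x) := by
    conv_lhs => rw [← List.take_append_drop k l]
    rw [List.countP_append, he2]
    omega
  have heven : Even ((l.take k).countP (fun x => !oddp x)) := by
    rw [he1, ← he3]; exact Reven_gt hR j
  have hsum : k = (l.take k).countP oddp + (l.take k).countP (fun x => !oddp x) := by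
    have := length_countP oddp (l.take k)
    omega
  obtain ⟨c, hc⟩ := heven
  omega

/-- (B): strict decrease between consecutive odd entries starting at even position -/
lemma strictDec (hR : l ∈ Rset) {k : ℕ} (hk : k + 1 < l.length) (hke : k % 2 = 0)
    (ho : l.getD k 0 % 2 = 1) (ho' : l.getD (k+1) 0 % 2 = 1) :
    l.getD (k+1) 0 < l.getD k 0 := by
  have hkl : k < l.length := lt_trans (Nat.lt_succ_self k) hk
  set u := (l.take k).countP oddp with hu
  have hA := posParity hR hkl ho
  obtain ⟨h1, h2⟩ := oddParts_getD hkl ho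
  have htake : l.take (k+1) = l.take k ++ [l[k]] := by
    rw [← List.take_concat_get hkl, List.concat_eq_append]
  have hu1 : (l.take (k+1)).countP oddp = u + 1 := by
    rw [htake, List.countP_append, List.countP_cons, List.countP_nil]
    rw [getD0 hkl] at ho
    simp [oddp, ho, hu]
  obtain ⟨h3, h4⟩ := oddParts_getD hk ho'
  rw [hu1] at h3 h4
  have hcond := hR.2.2.2.1 (u+1) (by omega) (by omega) (by omega)
  rw [h4] at hcond
  have hred : u + 1 - 1 = u := rfl
  rw [hred] at hcond
  exact lt_of_lt_of_eq hcond h2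

end RsetLemmas

end Stmt4Aux
namespace Stmt4Aux

section RunLemma

variable {l : List ℕ}

lemma mono_lt (j : ℕ) : ∀ a b : ℕ, b ≤ a → decide (j < b) = true → decide (j < a) = true := by
  intro a b h hb
  simp only [decide_eq_true_eq] at *
  omega

lemma mono_le (j : ℕ) : ∀ a b : ℕ, b ≤ a → decide (j ≤ b) = true → decide (j ≤ a) = true := by
  intro a b h hb
  simp only [decide_eq_true_eq] at *
  omega

lemma oddParts_eq_filter (l : List ℕ) : oddParts l = l.filter oddp := rfl

lemma a_odd (hR : l ∈ Rset) {k : ℕ} (hk : k < l.length) (he : l.getD k 0 % 2 = 0) :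
    (l.countP (fun x => decide (l.getD k 0 < x))) % 2 = 1 := by
  set j := l.getD k 0 with hj
  set w := l.countP (fun x => decide (j < x) && oddp x) with hw
  have hsplit := countP_and_split (fun x => decide (j < x)) oddp l
  obtain ⟨c, hc⟩ := Reven_gt hR j
  -- w = countP (j < ·) over oddParts
  have hfilt : (oddParts l).countP (fun x => decide (j < x)) = w := by
    rw [oddParts_eq_filter, List.countP_filter]
  have hOsort : (oddParts l).Pairwise (· ≥ ·) := (Rsorted hR).filter _
  have hlne : l ≠ [] := List.ne_nil_of_length_pos (by omega)
  have h0 : l.getD 0 0 % 2 = 1 := hR.2.1 hlne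
  have hj0 : j < l.getD 0 0 := by
    have := sorted_getD (Rsorted hR) (Nat.zero_le k) hk
    omega
  have hoddmem : ∀ x ∈ oddParts l, x % 2 = 1 := by
    intro x hx
    rw [oddParts_eq_filter, List.mem_filter] at hx
    have := hx.2
    simpa [oddp] using this
  have hw1 : 1 ≤ w := by
    have hpos : 0 < l.countP (fun x => decide (j < x) && oddp x) :=
      List.countP_pos_iff.2 ⟨l[0], l.getElem_mem (by omega), by
        rw [← getD0 (by omega : 0 < l.length)]
        simp only [Bool.and_eq_true, decide_eq_true_eq]
        exact ⟨hj0, by omega⟩⟩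
    omega
  have hws : w ≤ (oddParts l).length := by
    rw [← hfilt]; exact List.countP_le_length
  -- suffices: w odd
  suffices hwodd : w % 2 = 1 by omega
  by_contra hweven
  have hwe : w % 2 = 0 := by omega
  rcases lt_or_eq_of_le hws with hlt | heq
  · -- w < s : contradiction with condition (iv)
    have hchar := countP_char (mono_lt j) hOsort
    have hup : j < (oddParts l).getD (w-1) 0 := by
      have := (hchar (w-1) (by omega)).2 (by rw [hfilt]; omega)
      rw [getD0 (by omega)]
      simpa using this
    have hdn : (oddParts l).getD w 0 < j := by
      have hnot : ¬ (decide (j < (oddParts l)[w]) = true) := by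
        intro hcon
        have := (hchar w hlt).1 hcon
        rw [hfilt] at this
        omega
      simp only [decide_eq_true_eq, not_lt] at hnot
      have hoddw : (oddParts l)[w] % 2 = 1 :=
        hoddmem _ ((oddParts l).getElem_mem hlt)
      rw [getD0 hlt]
      omega
    have hcond := hR.2.2.2.2 w hw1 (by omega) hwe k hk
    exact hcond ⟨hdn, hup⟩
  · -- w = s : all odd entries > j, contradiction with condition (ii)
    have hall : ∀ x ∈ l, x % 2 = 1 → j < x := by
      intro x hx hox
      have hmem : x ∈ oddParts l := by
        rw [oddParts_eq_filter, List.mem_filter]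
        exact ⟨hx, by simp [oddp, hox]⟩
      have := List.countP_eq_length.1 (by rw [hfilt]; exact heq) x hmem
      simpa using this
    have hse : Even (l.length) := by
      have h1 := length_countP oddp l
      have h2 : l.countP oddp = (oddParts l).length := by
        rw [oddParts_eq_filter, List.countP_eq_length_filter]
      obtain ⟨d, hd⟩ : Even (l.countP (fun x => !oddp x)) := by
        apply even_countP
        intro x _ hx
        simp only [Bool.not_eq_true', oddp, decide_eq_false_iff_not] at hx
        exact Rcount hR (by omega)
      rw [Nat.even_iff]
      omega
    have hlast := hR.2.2.1 hlne hse
    have hle : l.getD (l.length - 1) 0 ≤ j := sorted_getD (Rsorted hR) (by omega) (by omega)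
    have := hall (l[l.length - 1]) (l.getElem_mem (by omega)) (by rw [← getD0 (by omega : l.length - 1 < l.length)]; exact hlast)
    rw [← getD0 (by omega : l.length - 1 < l.length)] at this
    omega

lemma runPair (hR : l ∈ Rset) {k : ℕ} (hk : k < l.length) (he : l.getD k 0 % 2 = 0) :
    (k % 2 = 0 → 1 ≤ k ∧ l.getD (k-1) 0 = l.getD k 0) ∧
    (k % 2 = 1 → k + 1 < l.length ∧ l.getD (k+1) 0 = l.getD k 0) := by
  set j := l.getD k 0 with hj
  set a := l.countP (fun x => decide (j < x)) with ha
  have hs := Rsorted hR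
  have hchar_lt := countP_char (mono_lt j) hs
  have hchar_le := countP_char (mono_le j) hs
  have hka : ¬ k < a := by
    intro hcon
    have h2 := (hchar_lt k hk).2 (by rw [ha] at hcon; exact hcon)
    rw [← getD0 hk, ← hj] at h2
    simp only [decide_eq_true_eq] at h2
    omega
  have hsplit := countP_le_split j l
  have hk2 : k < a + l.count j := by
    have h2 := (hchar_le k hk).1 (by rw [← getD0 hk, ← hj]; simp)
    omega
  obtain ⟨m2, hm⟩ := Rcount hR he
  have haodd := a_odd hR hk he
  rw [← ha] at haodd
  have hbound : a + l.count j ≤ l.length := by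
    have := List.countP_le_length (p := fun x => decide (j ≤ x)) (l := l)
    omega
  have hval : ∀ i, i < l.length → a ≤ i → i < a + l.count j → l.getD i 0 = j := by
    intro i hi h1 h2
    have hnlt : ¬ (j < l[i]) := by
      intro hcon
      have := (hchar_lt i hi).1 (by simpa using hcon)
      omega
    have hle : j ≤ l[i] := by
      have := (hchar_le i hi).2 (by omega)
      simpa using this
    rw [getD0 hi]
    omega
  constructor
  · intro hke
    have h1k : a ≤ k - 1 ∧ 1 ≤ k := by omega
    exact ⟨h1k.2, hval (k-1) (by omega) h1k.1 (by omega)⟩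
  · intro hko
    have hk1 : k + 1 < a + l.count j := by omega
    exact ⟨by omega, hval (k+1) (by omega) (by omega) hk1⟩

end RunLemma

end Stmt4Aux
namespace Stmt4Aux

section ZetaLemmas

variable {l : List ℕ}

lemma zeta_even (l : List ℕ) (k : ℕ) : Even (zetaEntry l k) := by
  rw [zetaEntry]
  split_ifs with h1 h2 <;> rw [Nat.even_iff] <;> omega

/-- zetaEntry at an even entry -/
lemma zeta_of_even {k : ℕ} (h : l.getD k 0 % 2 = 0) : zetaEntry l k = l.getD k 0 := by
  rw [zetaEntry, if_neg (by omega)]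

lemma zeta_of_odd_even_pos {k : ℕ} (h : l.getD k 0 % 2 = 1) (hk : k % 2 = 0) :
    zetaEntry l k = l.getD k 0 - 1 := by
  rw [zetaEntry, if_pos h, if_pos (by omega)]

lemma zeta_of_odd_odd_pos {k : ℕ} (h : l.getD k 0 % 2 = 1) (hk : k % 2 = 1) :
    zetaEntry l k = l.getD k 0 + 1 := by
  rw [zetaEntry, if_pos h, if_neg (by omega)]

lemma zeta_mono (hR : l ∈ Rset) {k : ℕ} (hk : k + 1 < l.length) :
    zetaEntry l (k+1) ≤ zetaEntry l k := by
  have hkl : k < l.length := by omega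
  have hsort : l.getD (k+1) 0 ≤ l.getD k 0 := sorted_getD (Rsorted hR) (by omega) hk
  rcases Nat.mod_two_eq_zero_or_one (l.getD k 0) with h1 | h1 <;>
    rcases Nat.mod_two_eq_zero_or_one (l.getD (k+1) 0) with h2 | h2 <;>
    rcases Nat.mod_two_eq_zero_or_one k with h3 | h3
  · rw [zeta_of_even h1, zeta_of_even h2]; exact hsort
  · rw [zeta_of_even h1, zeta_of_even h2]; exact hsort
  · -- k even, l_k even, l_{k+1} odd : k+1 odd pos → +1, need strict
    rw [zeta_of_even h1, zeta_of_odd_odd_pos h2 (by omega)]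
    omega
  · rw [zeta_of_even h1, zeta_of_odd_even_pos h2 (by omega)]
    omega
  · -- l_k odd at even pos : -1 ; l_{k+1} even
    rw [zeta_of_odd_even_pos h1 h3, zeta_of_even h2]
    omega
  · rw [zeta_of_odd_odd_pos h1 h3, zeta_of_even h2]
    omega
  · -- both odd, k even : strict decrease
    have hstrict := strictDec hR hk h3 h1 h2
    rw [zeta_of_odd_even_pos h1 h3, zeta_of_odd_odd_pos h2 (by omega)]
    omega
  · rw [zeta_of_odd_odd_pos h1 h3, zeta_of_odd_even_pos h2 (by omega)]
    omega

lemma zeta_chain (hR : l ∈ Rset) {x y : ℕ} (hxy : x ≤ y) (hy : y < l.length) :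
    zetaEntry l y ≤ zetaEntry l x := by
  induction y with
  | zero => have : x = 0 := by omega
            subst this; exact le_refl _
  | succ n ih =>
    rcases Nat.lt_or_ge x (n+1) with h | h
    · exact le_trans (zeta_mono hR hy) (ih (by omega) (by omega))
    · have : x = n + 1 := by omega
      subst this; exact le_refl _

/-- positivity except possibly at the last position (when value is 1 at even pos) -/
lemma zeta_pos (hR : l ∈ Rset) {k : ℕ} (hk : k < l.length)
    (hlast : k = l.length - 1 → ¬(l.getD k 0 = 1 ∧ k % 2 = 0)) :
    0 < zetaEntry l k := by
  have hp := Rpos hR hk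
  rcases Nat.mod_two_eq_zero_or_one (l.getD k 0) with h1 | h1
  · rw [zeta_of_even h1]; omega
  · rcases Nat.mod_two_eq_zero_or_one k with h3 | h3
    · rw [zeta_of_odd_even_pos h1 h3]
      rcases Nat.lt_or_ge (l.getD k 0) 2 with h4 | h4
      · -- value 1 at even position : must be last
        exfalso
        have hv1 : l.getD k 0 = 1 := by omega
        rcases Nat.lt_or_ge (k+1) l.length with h5 | h5
        · have hp2 := Rpos hR h5
          have hle : l.getD (k+1) 0 ≤ 1 := by
            have := sorted_getD (Rsorted hR) (by omega : k ≤ k+1) h5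
            omega
          have ho2 : l.getD (k+1) 0 % 2 = 1 := by omega
          have := strictDec hR h5 h3 h1 ho2
          omega
        · exact hlast (by omega) ⟨hv1, h3⟩
      · omega
    · rw [zeta_of_odd_odd_pos h1 h3]; omega

/-- length parity equals sum parity -/
lemma length_parity (hR : l ∈ Rset) : l.length % 2 = l.sum % 2 := by
  have h1 := length_countP oddp l
  have h2 : l.sum % 2 = l.countP oddp % 2 := sum_mod_two l
  obtain ⟨d, hd⟩ : Even (l.countP (fun x => !oddp x)) := by
    apply even_countP
    intro x _ hx
    simp only [Bool.not_eq_true', oddp, decide_eq_false_iff_not] at hx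
    exact Rcount hR (by omega)
  omega

/-- partial sum invariant -/
lemma zeta_sum (hR : l ∈ Rset) :
    ∀ k, k ≤ l.length →
      ((List.range k).map (zetaEntry l)).sum + ((l.take k).countP oddp) % 2 = (l.take k).sum := by
  intro k
  induction k with
  | zero => simp
  | succ n ih =>
    intro hn
    have hnl : n < l.length := by omega
    have ih2 := ih (by omega)
    rw [List.range_succ, List.map_append, List.sum_append, List.sum_take_succ l n hnl]
    have htake : l.take (n+1) = l.take n ++ [l[n]] := by
      rw [← List.take_concat_get hnl, List.concat_eq_append]
    rw [htake, List.countP_append, List.countP_cons, List.countP_nil]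
    simp only [List.map_cons, List.map_nil, List.sum_cons, List.sum_nil]
    rcases Nat.mod_two_eq_zero_or_one (l.getD n 0) with h1 | h1
    · rw [zeta_of_even h1]
      have : (oddp l[n]) = false := by
        simp only [oddp, decide_eq_false_iff_not]
        rw [← getD0 hnl]
        omega
      rw [this]
      rw [getD0 hnl] at h1 ⊢
      have hz : (if (false : Bool) = true then 1 else 0) = 0 := rfl
      rw [hz]
      omega
    · have hodd : (oddp l[n]) = true := by
        simp only [oddp, decide_eq_true_eq]
        rw [← getD0 hnl]
        omega
      rw [hodd]
      have hA := posParity hR hnl h1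
      have hp := Rpos hR hnl
      rcases Nat.mod_two_eq_zero_or_one n with h3 | h3
      · rw [zeta_of_odd_even_pos h1 h3, getD0 hnl] at *
        have hz : (if (true : Bool) = true then 1 else 0) = 1 := rfl
        rw [hz]
        omega
      · rw [zeta_of_odd_odd_pos h1 h3, getD0 hnl] at *
        have hz : (if (true : Bool) = true then 1 else 0) = 1 := rfl
        rw [hz]
        omega

end ZetaLemmas

end Stmt4Aux
namespace Stmt4Aux

section XiEntryInv

variable {l : List ℕ}

lemma getD_map_range {f : ℕ → ℕ} {n t : ℕ} (ht : t < n) :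
    ((List.range n).map f).getD t 0 = f t := by
  rw [getD0 (by simpa using ht), List.getElem_map, List.getElem_range]

lemma getD_dropLast {L : List ℕ} {t : ℕ} (ht : t < L.length - 1) :
    L.dropLast.getD t 0 = L.getD t 0 := by
  rw [getD0 (by simpa using ht), getD0 (by omega), List.getElem_dropLast]

lemma xiEntry_inv (hR : l ∈ Rset) {r' : List ℕ} {τ' : ℕ}
    (hlen : r'.length = τ') (hτ : τ' ≤ l.length) (hτ2 : l.length ≤ τ' + 1)
    (hval : ∀ t, t < τ' → r'.getD t 0 = zetaEntry l t)
    (hlast : τ' < l.length → l.getD (l.length - 1) 0 % 2 = 1)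
    {t : ℕ} (ht : t < τ') :
    xiEntry r' t = l.getD t 0 := by
  have htl : t < l.length := by omega
  have hpos := Rpos hR htl
  rcases Nat.mod_two_eq_zero_or_one (l.getD t 0) with h1 | h1 <;>
    rcases Nat.mod_two_eq_zero_or_one t with h3 | h3
  · -- l_t even, t even : both branches fail, value passes through
    have ht1 : 1 ≤ t := by
      by_contra hcon
      have ht0 : t = 0 := by omega
      have hlne : l ≠ [] := List.ne_nil_of_length_pos (by omega)
      have := hR.2.1 hlne
      rw [ht0] at h1
      omega
    obtain ⟨_, hprev⟩ := (runPair hR htl h1).1 h3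
    have heq : r'.getD (t-1) 0 = r'.getD t 0 := by
      rw [hval _ ht, hval _ (by omega), zeta_of_even h1, zeta_of_even (by rw [hprev]; exact h1), hprev]
    have hneg1 : ¬((t + 1) % 2 = 1 ∧ ∀ x < t, r'.getD t 0 < r'.getD x 0) := by
      rintro ⟨-, hall⟩
      have := hall (t-1) (by omega)
      omega
    have hneg2 : ¬((t + 1) % 2 = 0 ∧ ∀ x < r'.length, t < x → r'.getD x 0 < r'.getD t 0) := by
      rintro ⟨hpar, -⟩; omega
    rw [xiEntry, if_neg hneg1, if_neg hneg2, hval _ ht, zeta_of_even h1]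
  · -- l_t even, t odd : second branch must fail
    obtain ⟨hlt2, hnext⟩ := (runPair hR htl h1).2 h3
    have hnlt : t + 1 < τ' := by
      rcases Nat.lt_or_ge (t+1) τ' with h | h
      · exact h
      · exfalso
        have hteq : t + 1 = τ' := by omega
        have hlen2 : τ' < l.length := by omega
        have := hlast hlen2
        have hl1 : l.length - 1 = t + 1 := by omega
        rw [hl1, hnext] at this
        omega
    have heq : r'.getD (t+1) 0 = r'.getD t 0 := by
      rw [hval _ ht, hval _ hnlt, zeta_of_even h1, zeta_of_even (by rw [hnext]; exact h1), hnext]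
    have hneg1 : ¬((t + 1) % 2 = 1 ∧ ∀ x < t, r'.getD t 0 < r'.getD x 0) := by
      rintro ⟨hpar, -⟩; omega
    have hneg2 : ¬((t + 1) % 2 = 0 ∧ ∀ x < r'.length, t < x → r'.getD x 0 < r'.getD t 0) := by
      rintro ⟨-, hall⟩
      have := hall (t+1) (by omega) (by omega)
      omega
    rw [xiEntry, if_neg hneg1, if_neg hneg2, hval _ ht, zeta_of_even h1]
  · -- l_t odd, t even : first branch fires
    have hcond : ∀ x < t, r'.getD t 0 < r'.getD x 0 := by
      intro x hx
      have hxτ : x < τ' := by omega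
      have ht1l : t - 1 < l.length := by omega
      rw [hval _ ht, hval _ hxτ, zeta_of_odd_even_pos h1 h3]
      have hchain : zetaEntry l (t-1) ≤ zetaEntry l x := zeta_chain hR (by omega) ht1l
      have hgt : l.getD t 0 - 1 < zetaEntry l (t-1) := by
        have hsort : l.getD t 0 ≤ l.getD (t-1) 0 := sorted_getD (Rsorted hR) (by omega) htl
        rcases Nat.mod_two_eq_zero_or_one (l.getD (t-1) 0) with h5 | h5
        · rw [zeta_of_even h5]; omega
        · rw [zeta_of_odd_odd_pos h5 (by omega)]; omega
      omega
    rw [xiEntry, if_pos ⟨by omega, hcond⟩, hval _ ht, zeta_of_odd_even_pos h1 h3]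
    omega
  · -- l_t odd, t odd : second branch fires
    have hcond : ∀ x < r'.length, t < x → r'.getD x 0 < r'.getD t 0 := by
      intro x hx htx
      have hxτ : x < τ' := by omega
      have ht1l : t + 1 < l.length := by omega
      rw [hval _ ht, hval _ hxτ, zeta_of_odd_odd_pos h1 h3]
      have hchain : zetaEntry l x ≤ zetaEntry l (t+1) := zeta_chain hR (by omega) (by omega)
      have hlt2 : zetaEntry l (t+1) < l.getD t 0 + 1 := by
        have hsort : l.getD (t+1) 0 ≤ l.getD t 0 := sorted_getD (Rsorted hR) (by omega) ht1l
        rcases Nat.mod_two_eq_zero_or_one (l.getD (t+1) 0) with h5 | h5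
        · rw [zeta_of_even h5]; omega
        · rw [zeta_of_odd_even_pos h5 (by omega)]; omega
      omega
    have hneg1 : ¬((t + 1) % 2 = 1 ∧ ∀ x < t, r'.getD t 0 < r'.getD x 0) := by
      rintro ⟨hpar, -⟩; omega
    rw [xiEntry, if_neg hneg1, if_pos ⟨by omega, hcond⟩, hval _ ht, zeta_of_odd_odd_pos h1 h3]
    omega

end XiEntryInv

end Stmt4Aux
namespace Stmt4Aux

section Forward

variable {l : List ℕ}

lemma sum_m (hR : l ∈ Rset) :
    ((List.range l.length).map (zetaEntry l)).sum + l.length % 2 = l.sum := by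
  have h := zeta_sum hR l.length (le_refl _)
  rw [List.take_length] at h
  have h1 := length_countP oddp l
  obtain ⟨d, hd⟩ : Even (l.countP (fun x => !oddp x)) := by
    apply even_countP
    intro x _ hx
    simp only [Bool.not_eq_true', oddp, decide_eq_false_iff_not] at hx
    exact Rcount hR (by omega)
  omega

lemma build_SK (hR : l ∈ Rset) {r' : List ℕ} (hlen : r'.length ≤ l.length)
    (hval : ∀ t, t < r'.length → r'.getD t 0 = zetaEntry l t)
    (hpos : ∀ t, t < r'.length → 0 < zetaEntry l t) :
    IsPartition r' ∧ ∀ x ∈ r', x % 2 = 0 := by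
  refine ⟨⟨?_, ?_⟩, ?_⟩
  · rw [← List.isChain_iff_pairwise, List.isChain_iff_getElem]
    intro i hi
    rw [← getD0 (by omega), ← getD0 (by omega), hval _ (by omega), hval _ (by omega)]
    exact zeta_mono hR (by omega)
  · intro x hx
    obtain ⟨i, hi, rfl⟩ := List.mem_iff_getElem.1 hx
    rw [← getD0 hi, hval _ hi]
    exact hpos _ hi
  · intro x hx
    obtain ⟨i, hi, rfl⟩ := List.mem_iff_getElem.1 hx
    rw [← getD0 hi, hval _ hi]
    exact Nat.even_iff.1 (zeta_even l i)

lemma forward (N κ : ℕ) (hN : Even N) (hκ : κ = 0 ∨ κ = 1) {l : List ℕ}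
    (hl : l ∈ RN (N + κ)) :
    xiInv κ l ∈ SKN κ N ∧ xi κ (xiInv κ l) = l := by
  obtain ⟨hR, hsum⟩ := hl
  have hκ2 : κ % 2 = κ := by rcases hκ with rfl | rfl <;> rfl
  have hNe : N % 2 = 0 := Nat.even_iff.1 hN
  have hτκ : l.length % 2 = κ := by
    have h := length_parity hR
    rw [hsum] at h
    omega
  set m := (List.range l.length).map (zetaEntry l) with hm
  have hmlen : m.length = l.length := by simp [hm]
  have hmval : ∀ t, t < l.length → m.getD t 0 = zetaEntry l t := by
    intro t ht
    exact getD_map_range ht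
  by_cases hdrop : l ≠ [] ∧ l.getD (l.length - 1) 0 = κ
  · -- drop case : κ = 1, last entry is 1
    have hlen1 : 1 ≤ l.length := List.length_pos_iff.2 hdrop.1
    have hκ1 : κ = 1 := by
      rcases hκ with rfl | rfl
      · exfalso
        have hp := Rpos hR (k := l.length - 1) (by omega)
        have := hdrop.2
        omega
      · rfl
    subst hκ1
    have hlv : l.getD (l.length - 1) 0 = 1 := hdrop.2
    have hτodd : l.length % 2 = 1 := hτκ
    have hr' : xiInv 1 l = m.dropLast := by rw [xiInv, if_pos hdrop]
    have hdl : m.dropLast.length = l.length - 1 := by rw [List.length_dropLast, hmlen]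
    have hval : ∀ t, t < l.length - 1 → m.dropLast.getD t 0 = zetaEntry l t := by
      intro t ht'
      rw [getD_dropLast (by omega), hmval _ (by omega)]
    have hpos : ∀ t, t < m.dropLast.length → 0 < zetaEntry l t := by
      intro t ht'
      rw [hdl] at ht'
      exact zeta_pos hR (by omega) (fun h => by omega)
    have hzlast : zetaEntry l (l.length - 1) = 0 := by
      rw [zeta_of_odd_even_pos (by omega) (by omega), hlv]
    have hsum' : m.dropLast.sum = N := by
      have hmne : m ≠ [] := List.ne_nil_of_length_pos (by omega)
      have hsplit : m.dropLast ++ [m.getLast hmne] = m := List.dropLast_append_getLast hmne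
      have hlastval : m.getLast hmne = 0 := by
        rw [List.getLast_eq_getElem, ← getD0, hmlen]
        · rw [hmval _ (by omega), hzlast]
      have h2 : m.dropLast.sum + m.getLast hmne = m.sum := by
        conv_rhs => rw [← hsplit]
        rw [List.sum_append]
        simp
      have h3 := sum_m hR
      rw [← hm] at h3
      rw [hsum] at h3
      omega
    obtain ⟨hpart, heven⟩ :=
      build_SK hR (r' := m.dropLast) (by omega) (by rw [hdl]; exact hval) hpos
    constructor
    · rw [hr']
      exact ⟨⟨hpart, heven, fun h0 => by omega⟩, hsum'⟩
    · rw [hr', xi, hdl, if_pos (show (l.length - 1 + 1) % 2 = 1 by omega)]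
      apply List.ext_getElem
      · simp
        omega
      · intro n h1 h2
        simp only [List.length_append, List.length_map, List.length_range,
          List.length_cons, List.length_nil] at h1
        rcases Nat.lt_or_ge n (l.length - 1) with hn | hn
        · rw [List.getElem_append_left (by simpa using hn), List.getElem_map,
            List.getElem_range, ← getD0 h2]
          exact xiEntry_inv hR hdl (by omega) (by omega) hval
            (fun _ => by omega) hn
        · have hn' : n = l.length - 1 := by omega
          subst hn'
          rw [List.getElem_append_right (by simpa using hn)]
          simp only [List.length_map, List.length_range, Nat.sub_self,
            List.getElem_cons_zero]
          rw [← getD0 h2]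
          exact hlv.symm
  · -- no-drop case
    have hr' : xiInv κ l = m := by rw [xiInv, if_neg hdrop]
    by_cases hne : l = []
    · subst hne
      have hκ0 : κ = 0 := by
        rcases hκ with rfl | rfl
        · rfl
        · simp at hsum
      subst hκ0
      have hN0 : N = 0 := by simpa using hsum.symm
      subst hN0
      have hm0 : m = [] := by simp [hm]
      constructor
      · rw [hr', hm0]
        exact ⟨⟨⟨List.Pairwise.nil, by simp⟩, by simp, fun _ => by simp⟩, by simp⟩
      · rw [hr', hm0]
        simp [xi]
    · have hlv : ¬ (l.getD (l.length - 1) 0 = κ) := fun h => hdrop ⟨hne, h⟩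
      have hlen1 : 1 ≤ l.length := List.length_pos_iff.2 hne
      have hpos : ∀ t, t < m.length → 0 < zetaEntry l t := by
        intro t ht'
        rw [hmlen] at ht'
        apply zeta_pos hR ht'
        rintro ht1 ⟨hv1, hpar⟩
        have hκ1 : κ = 1 := by omega
        exact hlv (by rw [← ht1, hv1, hκ1])
      have hval : ∀ t, t < m.length → m.getD t 0 = zetaEntry l t := by
        intro t ht'
        rw [hmlen] at ht'
        exact hmval _ ht'
      have hsum' : m.sum = N := by
        have h3 := sum_m hR
        rw [← hm, hsum] at h3
        omega
      obtain ⟨hpart, heven⟩ := build_SK hR (r' := m) (by omega) hval hpos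
      constructor
      · rw [hr']
        refine ⟨⟨hpart, heven, fun h0 => ?_⟩, hsum'⟩
        rw [Nat.even_iff, hmlen]
        omega
      · rw [hr', xi, hmlen, if_neg (show ¬ (l.length + κ) % 2 = 1 by omega),
          List.append_nil]
        apply List.ext_getElem
        · simp
        · intro n h1 h2
          simp only [List.length_map, List.length_range] at h1
          rw [List.getElem_map, List.getElem_range, ← getD0 h2]
          exact xiEntry_inv hR hmlen (by omega) (by omega)
            (fun t ht => hval t (by omega)) (fun h => absurd h (by omega)) (by omega)

end Forward

end Stmt4Aux
namespace Stmt4Aux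

section Backward

lemma xiEntry_cases (r : List ℕ) (t : ℕ) :
    (t % 2 = 0 ∧ xiEntry r t = r.getD t 0 + 1) ∨
    (t % 2 = 1 ∧ xiEntry r t = r.getD t 0 - 1) ∨ xiEntry r t = r.getD t 0 := by
  rw [xiEntry]
  split_ifs with h1 h2
  · exact Or.inl ⟨by have := h1.1; omega, rfl⟩
  · exact Or.inr (Or.inl ⟨by have := h2.1; omega, rfl⟩)
  · exact Or.inr (Or.inr rfl)

lemma backward (N κ : ℕ) (hκ : κ = 0 ∨ κ = 1) {r : List ℕ} (hr : r ∈ SKN κ N) :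
    xiInv κ (xi κ r) = r := by
  obtain ⟨⟨⟨hsort, hpos⟩, heven, hlen⟩, hsum⟩ := hr
  have hre : ∀ t, t < r.length → r.getD t 0 % 2 = 0 ∧ 2 ≤ r.getD t 0 := by
    intro t ht
    have h1 := heven _ (r.getElem_mem ht)
    have h2 := hpos _ (r.getElem_mem ht)
    exact ⟨by rw [getD0 ht]; exact h1, by rw [getD0 ht]; omega⟩
  set M := (List.range r.length).map (xiEntry r) with hM
  have hMlen : M.length = r.length := by simp [hM]
  have hMval : ∀ t, t < r.length → M.getD t 0 = xiEntry r t := fun t ht => getD_map_range ht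
  have key2 : ∀ (l : List ℕ), (∀ t, t < r.length → l.getD t 0 = xiEntry r t) →
      ∀ t, t < r.length → zetaEntry l t = r.getD t 0 := by
    intro l hl t ht
    obtain ⟨h0, h2'⟩ := hre t ht
    rcases xiEntry_cases r t with ⟨hp, he⟩ | ⟨hp, he⟩ | he
    · rw [zetaEntry, hl t ht, he, if_pos (by omega), if_pos (by omega)]
      omega
    · rw [zetaEntry, hl t ht, he, if_pos (by omega), if_neg (by omega)]
      omega
    · rw [zetaEntry, hl t ht, he, if_neg (by omega)]
  -- helper for the two no-drop cases
  have nodrop : ∀ h0 : 1 ≤ r.length, M.getD (M.length - 1) 0 ≠ κ → xiInv κ M = r := by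
    intro h0 hne
    rw [xiInv, if_neg (by rintro ⟨-, hc⟩; exact hne hc), hMlen]
    apply List.ext_getElem
    · simp
    · intro n h1 h2
      simp only [List.length_map, List.length_range] at h1
      rw [List.getElem_map, List.getElem_range, ← getD0 h2]
      exact key2 M hMval n h1
  rcases hκ with rfl | rfl
  · -- κ = 0
    have hσe : r.length % 2 = 0 := Nat.even_iff.1 (hlen rfl)
    have hE : xi 0 r = M := by
      rw [xi, if_neg (by omega), List.append_nil]
    rw [hE]
    by_cases h0 : r.length = 0
    · have hM0 : M = [] := List.length_eq_zero_iff.1 (by omega)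
      rw [hM0, xiInv, if_neg (by simp)]
      simp only [List.length_nil, List.range_zero, List.map_nil]
      exact (List.length_eq_zero_iff.1 h0).symm
    · apply nodrop (by omega)
      rw [hMlen, hMval _ (by omega)]
      obtain ⟨he2, hge⟩ := hre (r.length - 1) (by omega)
      rcases xiEntry_cases r (r.length - 1) with ⟨-, he⟩ | ⟨-, he⟩ | he <;> omega
  · -- κ = 1
    rcases Nat.mod_two_eq_zero_or_one r.length with hσ | hσ
    · -- σ even : a 1 is appended and then dropped
      have hE : xi 1 r = M ++ [1] := by
        rw [xi, if_pos (by omega)]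
      rw [hE]
      have hlen2 : (M ++ [1]).length = r.length + 1 := by simp [hMlen]
      have hl : ∀ t, t < r.length → (M ++ [1]).getD t 0 = xiEntry r t := by
        intro t ht
        rw [List.getD_append _ _ _ _ (by rw [hMlen]; omega)]
        exact hMval t ht
      have hlast : (M ++ [1]).getD ((M ++ [1]).length - 1) 0 = 1 := by
        rw [hlen2, getD0 (by rw [hlen2]; omega),
          List.getElem_append_right (by rw [hMlen]; omega)]
        simp [hMlen]
      rw [xiInv, if_pos ⟨by simp, hlast⟩, hlen2, List.range_succ, List.map_append,
        List.map_cons, List.map_nil, List.dropLast_concat]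
      apply List.ext_getElem
      · simp
      · intro n h1 h2
        simp only [List.length_map, List.length_range] at h1
        rw [List.getElem_map, List.getElem_range, ← getD0 h2]
        exact key2 (M ++ [1]) hl n h1
    · -- σ odd : nothing appended
      have hE : xi 1 r = M := by
        rw [xi, if_neg (by omega), List.append_nil]
      rw [hE]
      apply nodrop (by omega)
      rw [hMlen, hMval _ (by omega)]
      obtain ⟨he2, hge⟩ := hre (r.length - 1) (by omega)
      rcases xiEntry_cases r (r.length - 1) with ⟨hp, he⟩ | ⟨hp, he⟩ | he
      · omega
      · omega
      · omega

end Backward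

end Stmt4Aux
/-- for even `N`, `κ ∈ {0,1}` and `r_* ∈ ℛ_{N+κ}`: each `r_k + ζ(k)` is even,
the sequence `(r_k + ζ(k))_k` is nonincreasing, and the map `xiInv κ` takes values in
`𝒮^κ_N` and is a two-sided inverse of the restriction of `Ξ` to `𝒮^κ_N`. -/
theorem stmt4 (N κ : ℕ) (hN : Even N) (hκ : κ = 0 ∨ κ = 1) :
    (∀ l ∈ RN (N + κ),
      (∀ k < l.length, Even (zetaEntry l k)) ∧
      (∀ k, k + 1 < l.length → zetaEntry l (k + 1) ≤ zetaEntry l k) ∧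
      xiInv κ l ∈ SKN κ N ∧ xi κ (xiInv κ l) = l) ∧
    ∀ r ∈ SKN κ N, xiInv κ (xi κ r) = r := by
  constructor
  · intro l hl
    obtain ⟨h1, h2⟩ := Stmt4Aux.forward N κ hN hκ hl
    exact ⟨fun k _ => Stmt4Aux.zeta_even l k, fun k hk => Stmt4Aux.zeta_mono hl.1 hk, h1, h2⟩
  · intro r hr
    exact Stmt4Aux.backward N κ hκ hr
end
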